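/- arXiv:2506.04638 — 13 statements merged into one kernel-verified Lean document; each statement's English description precedes it below -/
import Mathlib

section
/- Let Ω ⊆ ℂ² be open, a, b, c : Ω → ℂ holomorphic, and suppose the invariant h := ∂_x a + a·b − c is nonvanishing on Ω. Let u : Ω → ℂ be holomorphic with ∂_x∂_y u + a·∂_x u + b·∂_y u + c·u = 0 on Ω. Define u₊ := ∂_y u + a·u and a₊ := a − (∂_y h)/h, b₊ := b, c₊ := c − ∂_x a + ∂_y b − b·(∂_y h)/h. Then ∂_x∂_y u₊ + a₊·∂_x u₊ + b₊·∂_y u₊ + c₊·u₊ = 0 on Ω. -/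
/-- Partial derivative with respect to the first coordinate of `ℂ × ℂ`. -/
noncomputable def dX (f : ℂ × ℂ → ℂ) : ℂ × ℂ → ℂ := fun z => fderiv ℂ f z (1, 0)

/-- Partial derivative with respect to the second coordinate of `ℂ × ℂ`. -/
noncomputable def dY (f : ℂ × ℂ → ℂ) : ℂ × ℂ → ℂ := fun z => fderiv ℂ f z (0, 1)

private lemma dX_def (f : ℂ × ℂ → ℂ) : dX f = fun z => fderiv ℂ f z (1, 0) := rfl
private lemma dY_def (f : ℂ × ℂ → ℂ) : dY f = fun z => fderiv ℂ f z (0, 1) := rfl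

private lemma aux_an {f : ℂ × ℂ → ℂ} {Ω : Set (ℂ × ℂ)} (hf : AnalyticOnNhd ℂ f Ω)
    (v : ℂ × ℂ) : AnalyticOnNhd ℂ (fun z => fderiv ℂ f z v) Ω :=
  fun z hz => ((ContinuousLinearMap.apply ℂ ℂ v).analyticAt _).comp ((hf.fderiv) z hz)

private lemma dv_add {p q : ℂ × ℂ → ℂ} {z : ℂ × ℂ} (v : ℂ × ℂ)
    (hp : DifferentiableAt ℂ p z) (hq : DifferentiableAt ℂ q z) :
    fderiv ℂ (fun w => p w + q w) z v = fderiv ℂ p z v + fderiv ℂ q z v := by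
  rw [fderiv_fun_add hp hq]; rfl

private lemma dv_mul {p q : ℂ × ℂ → ℂ} {z : ℂ × ℂ} (v : ℂ × ℂ)
    (hp : DifferentiableAt ℂ p z) (hq : DifferentiableAt ℂ q z) :
    fderiv ℂ (fun w => p w * q w) z v =
      p z * fderiv ℂ q z v + q z * fderiv ℂ p z v := by
  rw [fderiv_fun_mul hp hq]
  simp

private lemma dv_symm {f : ℂ × ℂ → ℂ} {z : ℂ × ℂ} (hf : AnalyticAt ℂ f z) (v w : ℂ × ℂ) :
    fderiv ℂ (fun y => fderiv ℂ f y v) z w = fderiv ℂ (fun y => fderiv ℂ f y w) z v := by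
  have hd : DifferentiableAt ℂ (fderiv ℂ f) z := (hf.fderiv).differentiableAt
  have h1 : ∀ v : ℂ × ℂ, fderiv ℂ (fun y => fderiv ℂ f y v) z
      = (fderiv ℂ (fderiv ℂ f) z).flip v := by
    intro v
    have := fderiv_clm_apply (c := fderiv ℂ f) (u := fun _ => v) hd (differentiableAt_const v)
    simpa using this
  have hc : ContDiffAt ℂ 2 f z := hf.contDiffAt
  have hs := hc.isSymmSndFDerivAt (by simp [minSmoothness_of_isRCLikeNormedField])
  rw [h1 v, h1 w]
  exact (hs w v)

/-- Lemma 2.2 (Laplace transformation step): if `u` solves `Mu = 0` and the invariant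
`h = ∂ₓa + ab − c` is nonvanishing, then `u₊ = ∂_y u + a·u` solves `M₊u₊ = 0` with
`a₊ = a − ∂_y log h`, `b₊ = b`, `c₊ = c − ∂ₓa + ∂_y b − b·∂_y log h`. -/
theorem stmt_1 (Ω : Set (ℂ × ℂ)) (hΩ : IsOpen Ω)
    (a b c u : ℂ × ℂ → ℂ)
    (ha : AnalyticOnNhd ℂ a Ω) (hb : AnalyticOnNhd ℂ b Ω)
    (hc : AnalyticOnNhd ℂ c Ω) (hu : AnalyticOnNhd ℂ u Ω)
    (h : ℂ × ℂ → ℂ) (hh : h = fun z => dX a z + a z * b z - c z)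
    (hne : ∀ z ∈ Ω, h z ≠ 0)
    (hueq : ∀ z ∈ Ω, dX (dY u) z + a z * dX u z + b z * dY u z + c z * u z = 0)
    (uplus aplus bplus cplus : ℂ × ℂ → ℂ)
    (hup : uplus = fun z => dY u z + a z * u z)
    (hap : aplus = fun z => a z - dY h z / h z)
    (hbp : bplus = b)
    (hcp : cplus = fun z => c z - dX a z + dY b z - b z * (dY h z / h z)) :
    ∀ z ∈ Ω,
      dX (dY uplus) z + aplus z * dX uplus z + bplus z * dY uplus z + cplus z * uplus z = 0 := by
  simp only [dX_def, dY_def] at hh hup hueq ⊢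
  have hYu : AnalyticOnNhd ℂ (fun z => fderiv ℂ u z (0, 1)) Ω := aux_an hu _
  have hXa : AnalyticOnNhd ℂ (fun z => fderiv ℂ a z (1, 0)) Ω := aux_an ha _
  have hU : AnalyticOnNhd ℂ uplus Ω := by
    rw [hup]; exact fun z hz => (hYu z hz).add ((ha z hz).mul (hu z hz))
  have hXU : AnalyticOnNhd ℂ (fun z => fderiv ℂ uplus z (1, 0)) Ω := aux_an hU _
  have hH : AnalyticOnNhd ℂ h Ω := by
    rw [hh]
    exact fun w hw => ((hXa w hw).add ((ha w hw).mul (hb w hw))).sub (hc w hw)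
  -- Step 1: key identity  ∂ₓu₊ + b·u₊ = h·u  on Ω
  have E : ∀ w ∈ Ω, fderiv ℂ uplus w (1, 0) + b w * uplus w = h w * u w := by
    intro w hw
    have h1 : fderiv ℂ uplus w (1, 0)
        = fderiv ℂ (fun z => fderiv ℂ u z (0, 1)) w (1, 0)
          + (a w * fderiv ℂ u w (1, 0) + u w * fderiv ℂ a w (1, 0)) := by
      rw [hup]
      rw [dv_add (q := fun z => a z * u z) (1,0) ((hYu w hw).differentiableAt)
        (((ha w hw).mul (hu w hw)).differentiableAt)]
      rw [dv_mul (1,0) ((ha w hw).differentiableAt) ((hu w hw).differentiableAt)]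
    rw [h1, hup, hh]
    simp only
    linear_combination hueq w hw
  intro z hz
  -- Step 2: differentiate the identity in y
  have heq : (fun w => fderiv ℂ uplus w (1, 0) + b w * uplus w)
      =ᶠ[nhds z] (fun w => h w * u w) :=
    Filter.eventuallyEq_of_mem (hΩ.mem_nhds hz) (fun w hw => E w hw)
  have F2 : fderiv ℂ (fun w => fderiv ℂ uplus w (1, 0)) z (0, 1)
        + (b z * fderiv ℂ uplus z (0, 1) + uplus z * fderiv ℂ b z (0, 1))
      = h z * fderiv ℂ u z (0, 1) + u z * fderiv ℂ h z (0, 1) := by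
    have hD : fderiv ℂ (fun w => fderiv ℂ uplus w (1, 0) + b w * uplus w) z
        = fderiv ℂ (fun w => h w * u w) z := heq.fderiv_eq
    have l1 : fderiv ℂ (fun w => fderiv ℂ uplus w (1, 0) + b w * uplus w) z (0,1)
        = fderiv ℂ (fun w => fderiv ℂ uplus w (1, 0)) z (0, 1)
          + (b z * fderiv ℂ uplus z (0, 1) + uplus z * fderiv ℂ b z (0, 1)) := by
      rw [dv_add (q := fun w => b w * uplus w) (0,1) ((hXU z hz).differentiableAt)
        (((hb z hz).mul (hU z hz)).differentiableAt)]
      rw [dv_mul (0,1) ((hb z hz).differentiableAt) ((hU z hz).differentiableAt)]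
    have l2 : fderiv ℂ (fun w => h w * u w) z (0,1)
        = h z * fderiv ℂ u z (0, 1) + u z * fderiv ℂ h z (0, 1) := by
      rw [dv_mul (0,1) ((hH z hz).differentiableAt) ((hu z hz).differentiableAt)]
    have := DFunLike.congr_fun hD ((0 : ℂ), (1 : ℂ))
    rw [l1, l2] at this
    exact this
  -- Step 3: symmetry of second derivatives
  have F3 : fderiv ℂ (fun y => fderiv ℂ uplus y (0, 1)) z (1, 0)
      = fderiv ℂ (fun y => fderiv ℂ uplus y (1, 0)) z (0, 1) :=
    dv_symm (hU z hz) _ _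
  have F4 : fderiv ℂ u z (0, 1) = uplus z - a z * u z := by
    rw [hup]; ring
  have F1 := E z hz
  have hd : h z * (fderiv ℂ h z (0, 1) / h z) = fderiv ℂ h z (0, 1) :=
    mul_div_cancel₀ _ (hne z hz)
  have hH0 : h z = fderiv ℂ a z (1, 0) + a z * b z - c z := by rw [hh]
  rw [hap, hbp, hcp]
  simp only [dX_def, dY_def]
  apply mul_left_cancel₀ (hne z hz)
  linear_combination (h z) * F3 + (h z) * F2 + (h z)^2 * F4
    + (a z * h z - fderiv ℂ h z (0, 1)) * F1
    - (fderiv ℂ uplus z (1, 0) + b z * uplus z) * hd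
    + (h z * uplus z) * hH0
end

section
/- Let Ω ⊆ ℂ² be open, a, b, c : Ω → ℂ holomorphic, h := ∂_x a + a·b − c nonvanishing on Ω, and k := ∂_y b + a·b − c. Define a₊ := a − (∂_y h)/h, b₊ := b, c₊ := c − ∂_x a + ∂_y b − b·(∂_y h)/h, and the new invariants h₊ := ∂_x a₊ + a₊·b₊ − c₊ and k₊ := ∂_y b₊ + a₊·b₊ − c₊. Then k₊ = h on Ω, and h₊ satisfies the bilinear identity h²·h₊ = (2h − k)·h² − ( h·∂_x∂_y h − (∂_x h)(∂_y h) ) on Ω (equivalently, h₊ = 2h − k − ∂_x∂_y log h). -/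
theorem dX_analytic {f : ℂ × ℂ → ℂ} {Ω : Set (ℂ × ℂ)} (hf : AnalyticOnNhd ℂ f Ω) :
    AnalyticOnNhd ℂ (dX f) Ω :=
  (ContinuousLinearMap.apply ℂ ℂ (((1 : ℂ), (0 : ℂ)))).comp_analyticOnNhd hf.fderiv

theorem dY_analytic {f : ℂ × ℂ → ℂ} {Ω : Set (ℂ × ℂ)} (hf : AnalyticOnNhd ℂ f Ω) :
    AnalyticOnNhd ℂ (dY f) Ω :=
  (ContinuousLinearMap.apply ℂ ℂ (((0 : ℂ), (1 : ℂ)))).comp_analyticOnNhd hf.fderiv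

/-- Lemma 2.2, invariant relation: for the Laplace transform `M₊` of `M`,
the new invariants satisfy `k₊ = h` and `h₊ = 2h − k − ∂ₓ∂_y log h`, the latter
expressed in the bilinear form `h²·h₊ = (2h − k)·h² − (h·∂ₓ∂_y h − (∂ₓh)(∂_y h))`. -/
theorem stmt_2 (Ω : Set (ℂ × ℂ)) (hΩ : IsOpen Ω)
    (a b c : ℂ × ℂ → ℂ)
    (ha : AnalyticOnNhd ℂ a Ω) (hb : AnalyticOnNhd ℂ b Ω)
    (hc : AnalyticOnNhd ℂ c Ω)
    (h k : ℂ × ℂ → ℂ)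
    (hh : h = fun z => dX a z + a z * b z - c z)
    (hk : k = fun z => dY b z + a z * b z - c z)
    (hne : ∀ z ∈ Ω, h z ≠ 0)
    (aplus bplus cplus hplus kplus : ℂ × ℂ → ℂ)
    (hap : aplus = fun z => a z - dY h z / h z)
    (hbp : bplus = b)
    (hcp : cplus = fun z => c z - dX a z + dY b z - b z * (dY h z / h z))
    (hhp : hplus = fun z => dX aplus z + aplus z * bplus z - cplus z)
    (hkp : kplus = fun z => dY bplus z + aplus z * bplus z - cplus z) :
    ∀ z ∈ Ω,
      kplus z = h z ∧
      (h z)^2 * hplus z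
        = (2 * h z - k z) * (h z)^2 - (h z * dX (dY h) z - dX h z * dY h z) := by
  intro z hz
  -- analyticity of h and its derivatives
  have hAh : AnalyticOnNhd ℂ h Ω := by
    rw [hh]; exact ((dX_analytic ha).add (ha.mul hb)).sub hc
  have hYh : AnalyticOnNhd ℂ (dY h) Ω := dY_analytic hAh
  have hda : DifferentiableAt ℂ a z := (ha z hz).differentiableAt
  have hdh : DifferentiableAt ℂ h z := (hAh z hz).differentiableAt
  have hdYh : DifferentiableAt ℂ (dY h) z := (hYh z hz).differentiableAt
  have hnz : h z ≠ 0 := hne z hz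
  have hdq : DifferentiableAt ℂ (fun w => dY h w / h w) z := by simpa [div_eq_mul_inv] using hdYh.fun_mul (hdh.fun_inv hnz)
  -- key identity: h² · ∂ₓ(∂_y h / h) = h · ∂ₓ∂_y h − ∂ₓh · ∂_y h
  have hkey : (h z)^2 * dX (fun w => dY h w / h w) z
      = h z * dX (dY h) z - dX h z * dY h z := by
    have hev : (fun w => h w * (dY h w / h w)) =ᶠ[nhds z] dY h := by
      filter_upwards [hΩ.mem_nhds hz] with w hw
      field_simp [hne w hw]
    have hfd : fderiv ℂ (fun w => h w * (dY h w / h w)) z = fderiv ℂ (dY h) z :=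
      hev.fderiv_eq
    have hm : fderiv ℂ (fun w => h w * (dY h w / h w)) z (1, 0)
        = h z * fderiv ℂ (fun w => dY h w / h w) z (1, 0)
          + fderiv ℂ h z (1, 0) * (dY h z / h z) := by
      rw [fderiv_fun_mul hdh hdq]
      simp [mul_comm]
    rw [hfd] at hm
    have : dX (dY h) z = h z * dX (fun w => dY h w / h w) z + dX h z * (dY h z / h z) := by
      simpa [dX] using hm
    field_simp at this
    linear_combination -this
  -- ∂ₓ of aplus
  have hXap : dX aplus z = dX a z - dX (fun w => dY h w / h w) z := by
    rw [hap]
    simp only [dX]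
    rw [fderiv_fun_sub hda hdq]
    simp
  constructor
  · simp only [hkp, hap, hbp, hcp, hh]
    ring
  · simp only [hhp, hbp]
    rw [hXap, hap, hcp, hk]
    have hhz : h z = dX a z + a z * b z - c z := by rw [hh]
    linear_combination -hkey - 2 * (h z)^2 * hhz
end

section
/- Let Ω ⊆ ℂ² be open, a, b, c : Ω → ℂ holomorphic, and suppose k := ∂_y b + a·b − c is nonvanishing on Ω. Let u : Ω → ℂ be holomorphic with ∂_x∂_y u + a·∂_x u + b·∂_y u + c·u = 0 on Ω. Define u₋ := ∂_x u + b·u and a₋ := a, b₋ := b − (∂_x k)/k, c₋ := c + ∂_x a − ∂_y b − a·(∂_x k)/k. Then: (i) ∂_x∂_y u₋ + a₋·∂_x u₋ + b₋·∂_y u₋ + c₋·u₋ = 0 on Ω; (ii) the new invariants h₋ := ∂_x a₋ + a₋·b₋ − c₋ and k₋ := ∂_y b₋ + a₋·b₋ − c₋ satisfy h₋ = k and k²·k₋ = (2k − h)·k² − ( k·∂_x∂_y k − (∂_x k)(∂_y k) ), where h := ∂_x a + a·b − c. -/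
section Helpers

variable {f g : ℂ × ℂ → ℂ} {z v : ℂ × ℂ} {Ω : Set (ℂ × ℂ)}

lemma pd_add (hf : DifferentiableAt ℂ f z) (hg : DifferentiableAt ℂ g z) :
    fderiv ℂ (fun w => f w + g w) z v = fderiv ℂ f z v + fderiv ℂ g z v := by
  rw [fderiv_fun_add hf hg]; rfl

lemma pd_sub (hf : DifferentiableAt ℂ f z) (hg : DifferentiableAt ℂ g z) :
    fderiv ℂ (fun w => f w - g w) z v = fderiv ℂ f z v - fderiv ℂ g z v := by
  rw [fderiv_fun_sub hf hg]; rfl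

lemma pd_neg : fderiv ℂ (fun w => -f w) z v = -fderiv ℂ f z v := by
  rw [fderiv_fun_neg]; rfl

lemma pd_mul (hf : DifferentiableAt ℂ f z) (hg : DifferentiableAt ℂ g z) :
    fderiv ℂ (fun w => f w * g w) z v = fderiv ℂ f z v * g z + f z * fderiv ℂ g z v := by
  rw [fderiv_fun_mul hf hg]
  simp [ContinuousLinearMap.add_apply, ContinuousLinearMap.smul_apply, smul_eq_mul]
  ring

lemma dX_add (hf : DifferentiableAt ℂ f z) (hg : DifferentiableAt ℂ g z) :
    dX (fun w => f w + g w) z = dX f z + dX g z := pd_add hf hg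

lemma dX_sub (hf : DifferentiableAt ℂ f z) (hg : DifferentiableAt ℂ g z) :
    dX (fun w => f w - g w) z = dX f z - dX g z := pd_sub hf hg

lemma dX_neg : dX (fun w => -f w) z = -dX f z := pd_neg

lemma dX_mul (hf : DifferentiableAt ℂ f z) (hg : DifferentiableAt ℂ g z) :
    dX (fun w => f w * g w) z = dX f z * g z + f z * dX g z := pd_mul hf hg

lemma dY_add (hf : DifferentiableAt ℂ f z) (hg : DifferentiableAt ℂ g z) :
    dY (fun w => f w + g w) z = dY f z + dY g z := pd_add hf hg

lemma dY_sub (hf : DifferentiableAt ℂ f z) (hg : DifferentiableAt ℂ g z) :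
    dY (fun w => f w - g w) z = dY f z - dY g z := pd_sub hf hg

lemma dY_neg : dY (fun w => -f w) z = -dY f z := pd_neg

lemma dY_mul (hf : DifferentiableAt ℂ f z) (hg : DifferentiableAt ℂ g z) :
    dY (fun w => f w * g w) z = dY f z * g z + f z * dY g z := pd_mul hf hg

lemma dX_congr (hΩ : IsOpen Ω) (hz : z ∈ Ω) (h : Set.EqOn f g Ω) : dX f z = dX g z := by
  show fderiv ℂ f z _ = fderiv ℂ g z _
  rw [(h.eventuallyEq_of_mem (hΩ.mem_nhds hz)).fderiv_eq]

lemma dY_congr (hΩ : IsOpen Ω) (hz : z ∈ Ω) (h : Set.EqOn f g Ω) : dY f z = dY g z := by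
  show fderiv ℂ f z _ = fderiv ℂ g z _
  rw [(h.eventuallyEq_of_mem (hΩ.mem_nhds hz)).fderiv_eq]

lemma AnalyticOnNhd.dX' (hf : AnalyticOnNhd ℂ f Ω) : AnalyticOnNhd ℂ (dX f) Ω := fun z hz => by
  have := ((ContinuousLinearMap.apply ℂ ℂ (((1:ℂ),(0:ℂ)))).analyticAt (fderiv ℂ f z)).comp
    (hf z hz).fderiv
  exact this

lemma AnalyticOnNhd.dY' (hf : AnalyticOnNhd ℂ f Ω) : AnalyticOnNhd ℂ (dY f) Ω := fun z hz => by
  have := ((ContinuousLinearMap.apply ℂ ℂ (((0:ℂ),(1:ℂ)))).analyticAt (fderiv ℂ f z)).comp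
    (hf z hz).fderiv
  exact this

lemma pd_pd (hd : DifferentiableAt ℂ (fderiv ℂ f) z) (v w : ℂ × ℂ) :
    fderiv ℂ (fun y => fderiv ℂ f y w) z v = fderiv ℂ (fderiv ℂ f) z v w := by
  have h : (fun y => fderiv ℂ f y w) = fun y => (fderiv ℂ f y) ((fun _ => w) y) := rfl
  rw [h, fderiv_clm_apply hd (differentiableAt_const _)]
  simp

lemma dXdY_comm (_hΩ : IsOpen Ω) (hf : AnalyticOnNhd ℂ f Ω) (hz : z ∈ Ω) :
    dX (dY f) z = dY (dX f) z := by
  have hd : DifferentiableAt ℂ (fderiv ℂ f) z := ((hf z hz).fderiv).differentiableAt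
  have hsym : IsSymmSndFDerivAt ℂ f z :=
    (hf z hz).contDiffAt.isSymmSndFDerivAt (n := 2) (by simp [minSmoothness_of_isRCLikeNormedField])
  show fderiv ℂ (fun y => fderiv ℂ f y (0,1)) z (1,0)
      = fderiv ℂ (fun y => fderiv ℂ f y (1,0)) z (0,1)
  rw [pd_pd hd, pd_pd hd]
  exact hsym _ _

end Helpers
/-- Lemma 2.3 (backward Laplace transformation): if `u` solves `Mu = 0` and the invariant
`k = ∂_y b + ab − c` is nonvanishing, then `u₋ = ∂ₓu + b·u` solves `M₋u₋ = 0` with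
`a₋ = a`, `b₋ = b − ∂ₓ log k`, `c₋ = c + ∂ₓa − ∂_y b − a·∂ₓ log k`, and the new
invariants satisfy `h₋ = k` and `k₋ = 2k − h − ∂ₓ∂_y log k` (in bilinear form). -/
theorem stmt_3 (Ω : Set (ℂ × ℂ)) (hΩ : IsOpen Ω)
    (a b c u : ℂ × ℂ → ℂ)
    (ha : AnalyticOnNhd ℂ a Ω) (hb : AnalyticOnNhd ℂ b Ω)
    (hc : AnalyticOnNhd ℂ c Ω) (hu : AnalyticOnNhd ℂ u Ω)
    (h k : ℂ × ℂ → ℂ)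
    (hh : h = fun z => dX a z + a z * b z - c z)
    (hk : k = fun z => dY b z + a z * b z - c z)
    (hne : ∀ z ∈ Ω, k z ≠ 0)
    (hueq : ∀ z ∈ Ω, dX (dY u) z + a z * dX u z + b z * dY u z + c z * u z = 0)
    (uminus aminus bminus cminus hminus kminus : ℂ × ℂ → ℂ)
    (hum : uminus = fun z => dX u z + b z * u z)
    (ham : aminus = a)
    (hbm : bminus = fun z => b z - dX k z / k z)
    (hcm : cminus = fun z => c z + dX a z - dY b z - a z * (dX k z / k z))
    (hhm : hminus = fun z => dX aminus z + aminus z * bminus z - cminus z)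
    (hkm : kminus = fun z => dY bminus z + aminus z * bminus z - cminus z) :
    (∀ z ∈ Ω,
      dX (dY uminus) z + aminus z * dX uminus z + bminus z * dY uminus z
        + cminus z * uminus z = 0) ∧
    (∀ z ∈ Ω,
      hminus z = k z ∧
      (k z)^2 * kminus z
        = (2 * k z - h z) * (k z)^2 - (k z * dX (dY k) z - dX k z * dY k z)) := by
  -- analytic families
  have hKA : AnalyticOnNhd ℂ k Ω := by
    rw [hk]
    exact fun w hw => ((hb.dY' w hw).add ((ha w hw).mul (hb w hw))).sub (hc w hw)
  have hDu := hu.dX'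
  have hEu := hu.dY'
  have hDEu := hEu.dX'
  have hEb := hb.dY'
  -- pointwise differentiability (with explicitly written types)
  have da : ∀ w ∈ Ω, DifferentiableAt ℂ a w := fun w hw => (ha w hw).differentiableAt
  have db : ∀ w ∈ Ω, DifferentiableAt ℂ b w := fun w hw => (hb w hw).differentiableAt
  have dc : ∀ w ∈ Ω, DifferentiableAt ℂ c w := fun w hw => (hc w hw).differentiableAt
  have du : ∀ w ∈ Ω, DifferentiableAt ℂ u w := fun w hw => (hu w hw).differentiableAt
  have dDu : ∀ w ∈ Ω, DifferentiableAt ℂ (dX u) w := fun w hw => (hDu w hw).differentiableAt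
  have dEu : ∀ w ∈ Ω, DifferentiableAt ℂ (dY u) w := fun w hw => (hEu w hw).differentiableAt
  have dDEu : ∀ w ∈ Ω, DifferentiableAt ℂ (dX (dY u)) w :=
    fun w hw => (hDEu w hw).differentiableAt
  have dEb : ∀ w ∈ Ω, DifferentiableAt ℂ (dY b) w := fun w hw => (hEb w hw).differentiableAt
  have dbu : ∀ w ∈ Ω, DifferentiableAt ℂ (fun x => b x * u x) w :=
    fun w hw => ((hb w hw).mul (hu w hw)).differentiableAt
  have dEbu : ∀ w ∈ Ω, DifferentiableAt ℂ (fun x => dY b x * u x) w :=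
    fun w hw => ((hEb w hw).mul (hu w hw)).differentiableAt
  have dbEu : ∀ w ∈ Ω, DifferentiableAt ℂ (fun x => b x * dY u x) w :=
    fun w hw => ((hb w hw).mul (hEu w hw)).differentiableAt
  have dEbubEu : ∀ w ∈ Ω, DifferentiableAt ℂ (fun x => dY b x * u x + b x * dY u x) w :=
    fun w hw => ((dEbu w hw).add (dbEu w hw))
  have daDu : ∀ w ∈ Ω, DifferentiableAt ℂ (fun x => a x * dX u x) w :=
    fun w hw => ((ha w hw).mul (hDu w hw)).differentiableAt
  have dcu : ∀ w ∈ Ω, DifferentiableAt ℂ (fun x => c x * u x) w :=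
    fun w hw => ((hc w hw).mul (hu w hw)).differentiableAt
  have dbEucu : ∀ w ∈ Ω, DifferentiableAt ℂ (fun x => b x * dY u x + c x * u x) w :=
    fun w hw => ((dbEu w hw).add (dcu w hw))
  have dab : ∀ w ∈ Ω, DifferentiableAt ℂ (fun x => a x * b x) w :=
    fun w hw => ((ha w hw).mul (hb w hw)).differentiableAt
  have dEbab : ∀ w ∈ Ω, DifferentiableAt ℂ (fun x => dY b x + a x * b x) w :=
    fun w hw => ((dEb w hw).add (dab w hw))
  have hkz : ∀ z ∈ Ω, k z = dY b z + a z * b z - c z := fun z _ => by rw [hk]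
  have hDkz : ∀ z ∈ Ω, dX k z
      = dX (dY b) z + (dX a z * b z + a z * dX b z) - dX c z := by
    intro z hz
    rw [hk]
    rw [dX_sub (dEbab z hz) (dc z hz), dX_add (dEb z hz) (dab z hz),
      dX_mul (da z hz) (db z hz)]
  constructor
  · intro z hz
    have hEum : Set.EqOn (dY uminus)
        (fun w => dX (dY u) w + (dY b w * u w + b w * dY u w)) Ω := by
      intro w hw
      show dY uminus w = dX (dY u) w + (dY b w * u w + b w * dY u w)
      rw [hum]
      show dY (fun x => dX u x + b x * u x) w = _
      rw [dY_add (dDu w hw) (dbu w hw), dY_mul (db w hw) (du w hw),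
        dXdY_comm hΩ hu hw]
    have hPDErw : Set.EqOn (dX (dY u))
        (fun w => -(a w * dX u w + (b w * dY u w + c w * u w))) Ω := by
      intro w hw
      show dX (dY u) w = -(a w * dX u w + (b w * dY u w + c w * u w))
      linear_combination hueq w hw
    have e1 : dX (dY uminus) z
        = dX (dX (dY u)) z + ((dX (dY b) z * u z + dY b z * dX u z)
            + (dX b z * dY u z + b z * dX (dY u) z)) := by
      rw [dX_congr hΩ hz hEum, dX_add (dDEu z hz) (dEbubEu z hz),
        dX_add (dEbu z hz) (dbEu z hz),
        dX_mul (dEb z hz) (du z hz), dX_mul (db z hz) (dEu z hz)]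
    have e2 : dX (dX (dY u)) z
        = -((dX a z * dX u z + a z * dX (dX u) z)
            + ((dX b z * dY u z + b z * dX (dY u) z)
              + (dX c z * u z + c z * dX u z))) := by
      rw [dX_congr hΩ hz hPDErw, dX_neg,
        dX_add (daDu z hz) (dbEucu z hz), dX_add (dbEu z hz) (dcu z hz),
        dX_mul (da z hz) (dDu z hz), dX_mul (db z hz) (dEu z hz),
        dX_mul (dc z hz) (du z hz)]
    have e3 : dX uminus z = dX (dX u) z + (dX b z * u z + b z * dX u z) := by
      rw [hum]
      show dX (fun x => dX u x + b x * u x) z = _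
      rw [dX_add (dDu z hz) (dbu z hz), dX_mul (db z hz) (du z hz)]
    have e4 := hEum hz
    have hDEuz : dX (dY u) z = -(a z * dX u z + (b z * dY u z + c z * u z)) := by
      linear_combination hueq z hz
    have hne' : dY b z + a z * b z - c z ≠ 0 := by
      rw [← hkz z hz]; exact hne z hz
    rw [e1, e2, e3, e4]
    simp only [hum, ham, hbm, hcm]
    rw [hDEuz, hDkz z hz, hkz z hz]
    field_simp
    ring
  · intro z hz
    have hne0 := hne z hz
    have hKz := (hKA z hz).differentiableAt
    have hqA : AnalyticAt ℂ (fun w => dX k w / k w) z :=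
      ((hKA.dX' z hz)).div (hKA z hz) hne0
    have hqdiff := hqA.differentiableAt
    constructor
    · simp only [hhm, ham, hbm, hcm]
      rw [hkz z hz]
      ring
    · have hEQ : dY (fun w => dX k w / k w) z
          = (dX (dY k) z - dX k z / k z * dY k z) / k z := by
        have heq : Set.EqOn (fun w => dX k w / k w * k w) (dX k) Ω :=
          fun w hw => div_mul_cancel₀ _ (hne w hw)
        have h2 : dX (dY k) z
            = dY (fun w => dX k w / k w) z * k z + dX k z / k z * dY k z := by
          rw [dXdY_comm hΩ hKA hz, ← dY_congr hΩ hz heq, dY_mul hqdiff hKz]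
        rw [eq_div_iff hne0]
        linear_combination -h2
      simp only [hkm, ham, hbm, hcm, hh]
      rw [show dY (fun w => b w - dX k w / k w) z
            = dY b z - dY (fun w => dX k w / k w) z from
          dY_sub (db z hz) hqdiff]
      rw [hEQ]
      have hne' : dY b z + a z * b z - c z ≠ 0 := by
        rw [← hkz z hz]; exact hne z hz
      rw [hkz z hz]
      field_simp
      ring
end

section
/- Let α, β ∈ ℂ and for each n ∈ ℤ define r_n : {(x,y) ∈ ℂ² : x ≠ y} → ℂ by r_n(x,y) = (α+n)(β−n+1)/(x−y)². Then for every n ∈ ℤ and every (x,y) with x ≠ y, r_n·∂_x∂_y r_n − (∂_x r_n)(∂_y r_n) = ( r_{n+1} − 2r_n + r_{n−1} )·r_n², that is, the family {r_n} solves the 2-dimensional Toda equation ∂_x∂_y log r_n = r_{n+1} − 2r_n + r_{n−1} in bilinear form. -/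
noncomputable def L : ℂ × ℂ →L[ℂ] ℂ :=
  ContinuousLinearMap.fst ℂ ℂ ℂ - ContinuousLinearMap.snd ℂ ℂ ℂ

lemma key (c : ℂ) (m : ℤ) {z : ℂ × ℂ} (h : z.1 ≠ z.2) :
    HasFDerivAt (fun w : ℂ × ℂ => c * (w.1 - w.2) ^ m)
      ((c * m * (z.1 - z.2) ^ (m - 1)) • L) z := by
  have hu : HasFDerivAt (fun w : ℂ × ℂ => w.1 - w.2) L z :=
    (hasFDerivAt_fst.sub hasFDerivAt_snd)
  have hz : HasDerivAt (fun t : ℂ => t ^ m) ((m : ℂ) * (z.1 - z.2) ^ (m - 1)) (z.1 - z.2) :=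
    hasDerivAt_zpow m _ (Or.inl (sub_ne_zero.mpr h))
  have := (hz.comp_hasFDerivAt z hu).const_mul c
  simpa [smul_smul, mul_assoc] using this

lemma dX_val (c : ℂ) (m : ℤ) {z : ℂ × ℂ} (h : z.1 ≠ z.2) :
    dX (fun w : ℂ × ℂ => c * (w.1 - w.2) ^ m) z = c * m * (z.1 - z.2) ^ (m - 1) := by
  simp [dX, (key c m h).fderiv, L]

lemma dY_val (c : ℂ) (m : ℤ) {z : ℂ × ℂ} (h : z.1 ≠ z.2) :
    dY (fun w : ℂ × ℂ => c * (w.1 - w.2) ^ m) z = -(c * m * (z.1 - z.2) ^ (m - 1)) := by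
  simp [dY, (key c m h).fderiv, L]

set_option maxHeartbeats 1000000 in
/-- Proposition 2.13(3): the invariants `r_n(x,y) = (α+n)(β−n+1)/(x−y)²` of the Laplace
sequence of the Euler–Poisson–Darboux operator solve the 2-dimensional Toda equation
`∂ₓ∂_y log r_n = r_{n+1} − 2r_n + r_{n−1}` in bilinear form, off the diagonal `x = y`. -/
theorem stmt_6 (α β : ℂ) (r : ℤ → ℂ × ℂ → ℂ)
    (hr : ∀ n : ℤ, r n = fun z => (α + n) * (β - n + 1) / (z.1 - z.2)^2) :
    ∀ n : ℤ, ∀ z : ℂ × ℂ, z.1 ≠ z.2 →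
      r n z * dX (dY (r n)) z - dX (r n) z * dY (r n) z
        = (r (n+1) z - 2 * r n z + r (n-1) z) * (r n z)^2 := by
  intro n z hz
  set c : ℂ := (α + n) * (β - n + 1) with hc
  have hrn : r n = fun w : ℂ × ℂ => c * (w.1 - w.2) ^ (-2 : ℤ) := by
    rw [hr n]; funext w
    rw [div_eq_mul_inv]
    rw [show (-2 : ℤ) = -((2 : ℕ) : ℤ) by norm_num, zpow_neg, zpow_natCast, hc]
  -- dY (r n) agrees with the explicit function near z
  have hopen : IsOpen {w : ℂ × ℂ | w.1 ≠ w.2} := isOpen_ne_fun continuous_fst continuous_snd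
  have hev : dY (r n) =ᶠ[nhds z] (fun w : ℂ × ℂ => -(c * (-2)) * (w.1 - w.2) ^ (-3 : ℤ)) := by
    filter_upwards [hopen.mem_nhds hz] with w hw
    rw [hrn, dY_val c (-2) hw]
    norm_num
  have hdd : dX (dY (r n)) z = (-(c * (-2))) * (-3) * (z.1 - z.2) ^ (-4 : ℤ) := by
    have : fderiv ℂ (dY (r n)) z
        = fderiv ℂ (fun w : ℂ × ℂ => -(c * (-2)) * (w.1 - w.2) ^ (-3 : ℤ)) z :=
      hev.fderiv_eq
    show fderiv ℂ (dY (r n)) z (1, 0) = _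
    rw [this]
    have := dX_val (-(c * (-2))) (-3) hz
    simpa [dX] using this
  have hdx : dX (r n) z = c * (-2) * (z.1 - z.2) ^ (-3 : ℤ) := by
    rw [hrn]; simpa using dX_val c (-2) hz
  have hdy : dY (r n) z = -(c * (-2) * (z.1 - z.2) ^ (-3 : ℤ)) := by
    rw [hrn]; simpa using dY_val c (-2) hz
  have hs : z.1 - z.2 ≠ 0 := sub_ne_zero.mpr hz
  rw [hdd, hdx, hdy, hr (n+1), hr (n-1), hrn]
  have hk : ∀ k : ℕ, (z.1 - z.2) ^ (-(k : ℤ)) = ((z.1 - z.2)⁻¹) ^ k := by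
    intro k; rw [zpow_neg, zpow_natCast, inv_pow]
  have h2 : (z.1 - z.2) ^ (-2 : ℤ) = ((z.1 - z.2)⁻¹) ^ (2 : ℕ) := by
    rw [show (-2 : ℤ) = -((2 : ℕ) : ℤ) by norm_num]; exact hk 2
  have h3 : (z.1 - z.2) ^ (-3 : ℤ) = ((z.1 - z.2)⁻¹) ^ (3 : ℕ) := by
    rw [show (-3 : ℤ) = -((3 : ℕ) : ℤ) by norm_num]; exact hk 3
  have h4 : (z.1 - z.2) ^ (-4 : ℤ) = ((z.1 - z.2)⁻¹) ^ (4 : ℕ) := by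
    rw [show (-4 : ℤ) = -((4 : ℕ) : ℤ) by norm_num]; exact hk 4
  simp only [h2, h3, h4]
  simp only [div_eq_mul_inv, ← inv_pow]
  push_cast
  ring
end

section
/- Let α, β ∈ ℂ, set p(n) := (α+n)(β−n+1) for n ∈ ℤ, and let B : ℤ → ℂ satisfy B(n+1)·B(n−1) = p(n)·B(n)² for all n ∈ ℤ. Let Ω := {(x,y) ∈ ℂ² : x − y ∈ ℂ∖ℝ_{≤0}} and define t_n : Ω → ℂ by t_n(x,y) = B(n)·(x−y)^{p(n)} (complex power). Then for all n ∈ ℤ, t_n·∂_x∂_y t_n − (∂_x t_n)(∂_y t_n) = t_{n+1}·t_{n−1} on Ω; that is, {t_n} is a solution of the 2-dimensional Toda–Hirota equation in bilinear form. -/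
namespace Stmt7Aux

open Complex

/-- The linear map `(u, v) ↦ u - v`. -/
noncomputable def L : ℂ × ℂ →L[ℂ] ℂ :=
  ContinuousLinearMap.fst ℂ ℂ ℂ - ContinuousLinearMap.snd ℂ ℂ ℂ

lemma hasFDerivAt_sub (z : ℂ × ℂ) :
    HasFDerivAt (fun w : ℂ × ℂ => w.1 - w.2) L z :=
  (hasFDerivAt_fst.sub hasFDerivAt_snd)

lemma hasFDerivAt_cpow (c : ℂ) (b : ℂ) (z : ℂ × ℂ) (hz : z.1 - z.2 ∈ slitPlane) :
    HasFDerivAt (fun w : ℂ × ℂ => b * (w.1 - w.2) ^ c)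
      ((b * (c * (z.1 - z.2) ^ (c - 1))) • L) z := by
  have h1 : HasFDerivAt (fun w : ℂ × ℂ => (w.1 - w.2) ^ c)
      ((c * (z.1 - z.2) ^ (c - 1)) • L) z :=
    by have := (Complex.hasStrictDerivAt_cpow_const (c := c) hz).hasDerivAt.comp_hasFDerivAt z (hasFDerivAt_sub z); exact this
  simpa [smul_smul, mul_assoc] using h1.const_mul b

lemma fderiv_cpow (c : ℂ) (b : ℂ) (z : ℂ × ℂ) (hz : z.1 - z.2 ∈ slitPlane) :
    fderiv ℂ (fun w : ℂ × ℂ => b * (w.1 - w.2) ^ c) z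
      = (b * (c * (z.1 - z.2) ^ (c - 1))) • L :=
  (hasFDerivAt_cpow c b z hz).fderiv

lemma dY_cpow (c : ℂ) (b : ℂ) (z : ℂ × ℂ) (hz : z.1 - z.2 ∈ slitPlane) :
    dY (fun w : ℂ × ℂ => b * (w.1 - w.2) ^ c) z
      = -(b * c) * (z.1 - z.2) ^ (c - 1) := by
  simp only [dY, fderiv_cpow c b z hz, ContinuousLinearMap.smul_apply, L,
    ContinuousLinearMap.sub_apply, ContinuousLinearMap.coe_fst',
    ContinuousLinearMap.coe_snd', smul_eq_mul]
  ring

lemma dX_cpow (c : ℂ) (b : ℂ) (z : ℂ × ℂ) (hz : z.1 - z.2 ∈ slitPlane) :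
    dX (fun w : ℂ × ℂ => b * (w.1 - w.2) ^ c) z
      = (b * c) * (z.1 - z.2) ^ (c - 1) := by
  simp only [dX, fderiv_cpow c b z hz, ContinuousLinearMap.smul_apply, L,
    ContinuousLinearMap.sub_apply, ContinuousLinearMap.coe_fst',
    ContinuousLinearMap.coe_snd', smul_eq_mul]
  ring

lemma dY_eventuallyEq (c : ℂ) (b : ℂ) (z : ℂ × ℂ) (hz : z.1 - z.2 ∈ slitPlane) :
    dY (fun w : ℂ × ℂ => b * (w.1 - w.2) ^ c)
      =ᶠ[nhds z] fun w => -(b * c) * (w.1 - w.2) ^ (c - 1) := by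
  have hopen : IsOpen {w : ℂ × ℂ | w.1 - w.2 ∈ slitPlane} :=
    isOpen_slitPlane.preimage (continuous_fst.sub continuous_snd)
  filter_upwards [hopen.mem_nhds hz] with w hw
  exact dY_cpow c b w hw

lemma dXdY_cpow (c : ℂ) (b : ℂ) (z : ℂ × ℂ) (hz : z.1 - z.2 ∈ slitPlane) :
    dX (dY (fun w : ℂ × ℂ => b * (w.1 - w.2) ^ c)) z
      = -(b * c) * (c - 1) * (z.1 - z.2) ^ (c - 1 - 1) := by
  have heq := (dY_eventuallyEq c b z hz).fderiv_eq (𝕜 := ℂ)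
  simp only [dX, heq]
  have := dX_cpow (c - 1) (-(b * c)) z hz
  simp only [dX] at this
  rw [this]


end Stmt7Aux

/-- Proposition 2.14: the seed solution of the 2-dimensional Toda–Hirota equation
arising from the Euler–Poisson–Darboux operator. With `p(n) = (α+n)(β−n+1)` and
`B(n+1)B(n−1) = p(n)B(n)²`, the family `t_n(x,y) = B(n)·(x−y)^{p(n)}` satisfies
`t_n·∂ₓ∂_y t_n − (∂ₓt_n)(∂_y t_n) = t_{n+1}·t_{n−1}` on the region where
`x − y` lies in the slit plane `ℂ∖ℝ_{≤0}`. -/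
theorem stmt_7 (α β : ℂ) (p : ℤ → ℂ) (hp : ∀ n : ℤ, p n = (α + n) * (β - n + 1))
    (B : ℤ → ℂ) (hB : ∀ n : ℤ, B (n+1) * B (n-1) = p n * (B n)^2)
    (t : ℤ → ℂ × ℂ → ℂ)
    (ht : ∀ n : ℤ, t n = fun z => B n * (z.1 - z.2) ^ (p n)) :
    ∀ n : ℤ, ∀ z : ℂ × ℂ, z.1 - z.2 ∈ Complex.slitPlane →
      t n z * dX (dY (t n)) z - dX (t n) z * dY (t n) z = t (n+1) z * t (n-1) z := by
  intro n z hz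
  set w := z.1 - z.2 with hw
  have hw0 : w ≠ 0 := Complex.slitPlane_ne_zero hz
  rw [ht n, ht (n+1), ht (n-1)]
  rw [Stmt7Aux.dXdY_cpow (p n) (B n) z hz, Stmt7Aux.dX_cpow (p n) (B n) z hz,
    Stmt7Aux.dY_cpow (p n) (B n) z hz]
  simp only [← hw]
  -- exponent identity
  have hexp : p (n+1) + p (n-1) = p n + (p n - 1 - 1) := by
    rw [hp (n+1), hp (n-1), hp n]
    push_cast
    ring
  have h1 : w ^ p (n+1) * w ^ p (n-1) = w ^ p n * w ^ (p n - 1 - 1) := by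
    rw [← Complex.cpow_add _ _ hw0, ← Complex.cpow_add _ _ hw0, hexp]
  have h2 : w ^ (p n - 1) * w ^ (p n - 1) = w ^ p n * w ^ (p n - 1 - 1) := by
    rw [← Complex.cpow_add _ _ hw0, ← Complex.cpow_add _ _ hw0]
    ring_nf
  calc B n * w ^ p n * (-(B n * p n) * (p n - 1) * w ^ (p n - 1 - 1)) -
        B n * p n * w ^ (p n - 1) * (-(B n * p n) * w ^ (p n - 1))
      = p n * B n ^ 2 * (w ^ p n * w ^ (p n - 1 - 1))
        + B n ^ 2 * p n ^ 2 * (w ^ (p n - 1) * w ^ (p n - 1))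
        - B n ^ 2 * p n ^ 2 * (w ^ p n * w ^ (p n - 1 - 1)) := by ring
    _ = B (n+1) * w ^ p (n+1) * (B (n-1) * w ^ p (n-1)) := by
        rw [h2, ← h1, ← hB n]; ring
end

section
/- Let N ≥ 2, α ∈ ℂ^N, u ∈ ℂ, and let U be the open set of matrices z ∈ Mat(2×N, ℂ) such that ℓ_j(z) := z_{1,j} + u·z_{2,j} ∈ ℂ∖ℝ_{≤0} for every 1 ≤ j ≤ N. Define ψ : U → ℂ by ψ(z) = ∏_{j=1}^N ℓ_j(z)^{α_j} (complex powers). Then for all 1 ≤ p ≠ q ≤ N and all z ∈ U, ∂_{1,p}∂_{2,q} ψ(z) = ∂_{2,p}∂_{1,q} ψ(z), where ∂_{i,p} denotes the partial derivative with respect to the matrix entry z_{i,p}. -/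
/-- Partial derivative of a function of a `2 × N` complex matrix (encoded as
`Fin 2 → Fin N → ℂ`) with respect to the entry in row `i`, column `p`. -/
noncomputable def pdm {N : ℕ} (i : Fin 2) (p : Fin N) (f : (Fin 2 → Fin N → ℂ) → ℂ) :
    (Fin 2 → Fin N → ℂ) → ℂ :=
  fun z => fderiv ℂ f z (Pi.single i (Pi.single p (1 : ℂ)))

noncomputable def Lmap {N : ℕ} (u : ℂ) (j : Fin N) : (Fin 2 → Fin N → ℂ) →L[ℂ] ℂ :=
  ((ContinuousLinearMap.proj (R := ℂ) (φ := fun _ : Fin N => ℂ) j).comp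
      (ContinuousLinearMap.proj (R := ℂ) (φ := fun _ : Fin 2 => Fin N → ℂ) 0))
    + u • ((ContinuousLinearMap.proj (R := ℂ) (φ := fun _ : Fin N => ℂ) j).comp
      (ContinuousLinearMap.proj (R := ℂ) (φ := fun _ : Fin 2 => Fin N → ℂ) 1))

lemma Lmap_apply {N : ℕ} (u : ℂ) (j : Fin N) (z : Fin 2 → Fin N → ℂ) :
    Lmap u j z = z 0 j + u * z 1 j := by
  simp [Lmap]

lemma Lmap_single {N : ℕ} (u : ℂ) (j : Fin N) (i : Fin 2) (p : Fin N) :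
    Lmap u j (Pi.single i (Pi.single p (1 : ℂ)))
      = if j = p then (if i = 0 then 1 else u) else 0 := by
  rw [Lmap_apply]
  fin_cases i <;> simp [Pi.single_apply] <;> split <;> simp

lemma hasFDerivAt_F {N : ℕ} (u : ℂ) (β : Fin N → ℂ) (z : Fin 2 → Fin N → ℂ)
    (hz : ∀ j, z 0 j + u * z 1 j ∈ Complex.slitPlane) :
    HasFDerivAt (fun z : Fin 2 → Fin N → ℂ => ∏ j, (z 0 j + u * z 1 j) ^ β j)
      (∑ j, (∏ k ∈ Finset.univ.erase j, (z 0 k + u * z 1 k) ^ β k) •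
        ((β j * (z 0 j + u * z 1 j) ^ (β j - 1)) • Lmap u j)) z := by
  exact HasFDerivAt.finset_prod fun j _ => by
    have hL : HasFDerivAt (fun z : Fin 2 → Fin N → ℂ => z 0 j + u * z 1 j) (Lmap u j) z :=
      (Lmap u j).hasFDerivAt.congr_fderiv rfl |>.congr_of_eventuallyEq
        (Filter.Eventually.of_forall fun w => (Lmap_apply u j w).symm)
    exact ((Complex.hasStrictDerivAt_cpow_const (hz j)).hasDerivAt.comp_hasFDerivAt z hL)

lemma pdm_F {N : ℕ} (u : ℂ) (β : Fin N → ℂ) (i : Fin 2) (p : Fin N)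
    (z : Fin 2 → Fin N → ℂ) (hz : ∀ j, z 0 j + u * z 1 j ∈ Complex.slitPlane) :
    pdm i p (fun z => ∏ j, (z 0 j + u * z 1 j) ^ β j) z
      = (if i = 0 then 1 else u) * β p *
        ∏ j, (z 0 j + u * z 1 j) ^ (Function.update β p (β p - 1) j) := by
  rw [pdm, (hasFDerivAt_F u β z hz).fderiv]
  rw [ContinuousLinearMap.sum_apply]
  rw [Finset.sum_eq_single p]
  · have h1 : (fun j => (z 0 j + u * z 1 j) ^ Function.update β p (β p - 1) j)
        = Function.update (fun j => (z 0 j + u * z 1 j) ^ β j) p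
            ((z 0 p + u * z 1 p) ^ (β p - 1)) := by
      funext j
      rcases eq_or_ne j p with rfl | h
      · simp
      · simp [Function.update_apply, h]
    rw [h1, Finset.prod_update_of_mem (Finset.mem_univ p)]
    simp only [ContinuousLinearMap.smul_apply, Lmap_single, if_pos rfl, smul_eq_mul, if_true,
      Finset.sdiff_singleton_eq_erase]
    ring
  · intro j _ hj
    simp [Lmap_single, hj]
  · simp


/-- Proposition 3.3 (pointwise version): the integrand
`ψ(z) = ∏_j (z_{1,j} + u·z_{2,j})^{α_j}` of the Gelfand hypergeometric function satisfies
the Gelfand hypergeometric equation `□_{p,q}ψ = (∂_{1,p}∂_{2,q} − ∂_{2,p}∂_{1,q})ψ = 0`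
on the open set where each linear form lies in the slit plane. -/
theorem stmt_8 {N : ℕ} (hN : 2 ≤ N) (α : Fin N → ℂ) (u : ℂ)
    (ψ : (Fin 2 → Fin N → ℂ) → ℂ)
    (hψ : ψ = fun z => ∏ j, (z 0 j + u * z 1 j) ^ (α j)) :
    ∀ p q : Fin N, p ≠ q → ∀ z : Fin 2 → Fin N → ℂ,
      (∀ j, z 0 j + u * z 1 j ∈ Complex.slitPlane) →
      pdm 0 p (pdm 1 q ψ) z = pdm 1 p (pdm 0 q ψ) z := by
  subst hψ
  intro p q hpq z hz
  -- the open set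
  have hSopen : IsOpen {w : Fin 2 → Fin N → ℂ | ∀ j, w 0 j + u * w 1 j ∈ Complex.slitPlane} := by
    have h : {w : Fin 2 → Fin N → ℂ | ∀ j, w 0 j + u * w 1 j ∈ Complex.slitPlane}
        = ⋂ j, (fun w : Fin 2 → Fin N → ℂ => w 0 j + u * w 1 j) ⁻¹' Complex.slitPlane := by
      ext w; simp [Set.mem_iInter]
    rw [h]
    exact isOpen_iInter_of_finite fun j =>
      Complex.isOpen_slitPlane.preimage (by fun_prop)
  have hmem : {w : Fin 2 → Fin N → ℂ | ∀ j, w 0 j + u * w 1 j ∈ Complex.slitPlane} ∈ nhds z :=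
    hSopen.mem_nhds hz
  set β₁ : Fin N → ℂ := Function.update α q (α q - 1) with hβ₁
  have hEq1 : pdm 1 q (fun z : Fin 2 → Fin N → ℂ => ∏ j, (z 0 j + u * z 1 j) ^ (α j))
      =ᶠ[nhds z] fun w => (u * α q) * ∏ j, (w 0 j + u * w 1 j) ^ β₁ j :=
    Filter.eventuallyEq_of_mem hmem fun w hw => by
      rw [pdm_F u α 1 q w hw]; norm_num; exact Or.inl rfl
  have hEq2 : pdm 0 q (fun z : Fin 2 → Fin N → ℂ => ∏ j, (z 0 j + u * z 1 j) ^ (α j))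
      =ᶠ[nhds z] fun w => ((1 : ℂ) * α q) * ∏ j, (w 0 j + u * w 1 j) ^ β₁ j :=
    Filter.eventuallyEq_of_mem hmem fun w hw => by
      rw [pdm_F u α 0 q w hw]; norm_num; exact Or.inl rfl
  have hd : DifferentiableAt ℂ
      (fun w : Fin 2 → Fin N → ℂ => ∏ j, (w 0 j + u * w 1 j) ^ β₁ j) z :=
    (hasFDerivAt_F u β₁ z hz).differentiableAt
  have hc : ∀ (c : ℂ) (i : Fin 2),
      fderiv ℂ (fun w => c * ∏ j, (w 0 j + u * w 1 j) ^ β₁ j) z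
          (Pi.single i (Pi.single p (1 : ℂ)))
        = c * pdm i p (fun w => ∏ j, (w 0 j + u * w 1 j) ^ β₁ j) z := by
    intro c i
    rw [fderiv_const_mul hd c]
    simp [pdm]
  have hL : pdm 0 p (pdm 1 q (fun z : Fin 2 → Fin N → ℂ =>
        ∏ j, (z 0 j + u * z 1 j) ^ (α j))) z
      = (u * α q) * pdm 0 p (fun w => ∏ j, (w 0 j + u * w 1 j) ^ β₁ j) z := by
    rw [pdm, hEq1.fderiv_eq]; exact hc _ 0
  have hR : pdm 1 p (pdm 0 q (fun z : Fin 2 → Fin N → ℂ =>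
        ∏ j, (z 0 j + u * z 1 j) ^ (α j))) z
      = ((1 : ℂ) * α q) * pdm 1 p (fun w => ∏ j, (w 0 j + u * w 1 j) ^ β₁ j) z := by
    rw [pdm, hEq2.fderiv_eq]; exact hc _ 1
  rw [hL, hR, pdm_F u β₁ 0 p z hz, pdm_F u β₁ 1 p z hz]
  norm_num
  ring
end

section
/- Let N ≥ 2, α ∈ ℂ^N, u ∈ ℂ, and let U be the open set of z ∈ Mat(2×N, ℂ) with ℓ_j(z) := z_{1,j} + u·z_{2,j} ∈ ℂ∖ℝ_{≤0} for all j. For β ∈ ℂ^N write ψ_β(z) = ∏_{j=1}^N ℓ_j(z)^{β_j}. Then for all 1 ≤ p ≠ q ≤ N and z ∈ U, the contiguity relation z_{1,p}·∂_{1,q} ψ_α(z) + z_{2,p}·∂_{2,q} ψ_α(z) = α_q · ψ_{α + e_p − e_q}(z) holds, where e_p ∈ ℂ^N is the p-th standard unit vector and ∂_{i,q} is the partial derivative with respect to the entry z_{i,q}. -/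
section aux
variable {N : ℕ} (u : ℂ)

/-- The linear form `z ↦ z 0 j + u * z 1 j` as a continuous linear map. -/
noncomputable def ellCLM (j : Fin N) : ((Fin 2 → Fin N → ℂ)) →L[ℂ] ℂ :=
  ((ContinuousLinearMap.proj j : (Fin N → ℂ) →L[ℂ] ℂ).comp
      (ContinuousLinearMap.proj (0 : Fin 2) : (Fin 2 → Fin N → ℂ) →L[ℂ] (Fin N → ℂ)))
    + u • ((ContinuousLinearMap.proj j : (Fin N → ℂ) →L[ℂ] ℂ).comp
      (ContinuousLinearMap.proj (1 : Fin 2) : (Fin 2 → Fin N → ℂ) →L[ℂ] (Fin N → ℂ)))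

lemma ellCLM_apply (j : Fin N) (z : Fin 2 → Fin N → ℂ) :
    ellCLM u j z = z 0 j + u * z 1 j := rfl

lemma hasFDerivAt_psi (α : Fin N → ℂ) (z : Fin 2 → Fin N → ℂ)
    (hz : ∀ j, z 0 j + u * z 1 j ∈ Complex.slitPlane) :
    HasFDerivAt (fun z : Fin 2 → Fin N → ℂ => ∏ j, (z 0 j + u * z 1 j) ^ (α j))
      (∑ j, (∏ k ∈ Finset.univ.erase j, (z 0 k + u * z 1 k) ^ (α k)) •
        ((α j * (z 0 j + u * z 1 j) ^ (α j - 1)) • ellCLM u j)) z := by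
  apply HasFDerivAt.finset_prod
  intro j _
  exact (Complex.hasStrictDerivAt_cpow_const (hz j)).hasDerivAt.comp_hasFDerivAt z
    ((ellCLM u j).hasFDerivAt)

end aux

/-- Proposition 3.4 (pointwise version): the integrand
`ψ_β(z) = ∏_j (z_{1,j} + u·z_{2,j})^{β_j}` of the Gelfand hypergeometric function satisfies
the contiguity relation `L_{p,q}ψ_α = z_{1,p}∂_{1,q}ψ_α + z_{2,p}∂_{2,q}ψ_α
= α_q·ψ_{α+e_p−e_q}` on the open set where each linear form lies in the slit plane. -/
theorem stmt_9 {N : ℕ} (hN : 2 ≤ N) (α : Fin N → ℂ) (u : ℂ)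
    (ψ : (Fin N → ℂ) → (Fin 2 → Fin N → ℂ) → ℂ)
    (hψ : ∀ β : Fin N → ℂ, ψ β = fun z => ∏ j, (z 0 j + u * z 1 j) ^ (β j)) :
    ∀ p q : Fin N, p ≠ q → ∀ z : Fin 2 → Fin N → ℂ,
      (∀ j, z 0 j + u * z 1 j ∈ Complex.slitPlane) →
      z 0 p * pdm 0 q (ψ α) z + z 1 p * pdm 1 q (ψ α) z
        = α q * ψ (α + Pi.single p 1 - Pi.single q 1) z := by
  intro p q hpq z hz
  have hne : ∀ j, z 0 j + u * z 1 j ≠ 0 := fun j => Complex.slitPlane_ne_zero (hz j)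
  have hD := hasFDerivAt_psi u α z hz
  have hf : fderiv ℂ (ψ α) z = ∑ j, (∏ k ∈ Finset.univ.erase j, (z 0 k + u * z 1 k) ^ (α k)) •
        ((α j * (z 0 j + u * z 1 j) ^ (α j - 1)) • ellCLM u j) := by
    rw [hψ]; exact hD.fderiv
  set P : ℂ := ∏ k ∈ Finset.univ.erase q, (z 0 k + u * z 1 k) ^ (α k) with hP
  have happ : ∀ i : Fin 2, ∀ v : ℂ, (∀ j : Fin N, ellCLM u j (Pi.single i (Pi.single q v)) =
      (if j = q then (if i = 0 then v else u * v) else 0)) := by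
    intro i v j
    simp only [ellCLM_apply]
    fin_cases i <;> simp [Pi.single_apply] <;> split <;> simp
  have hpd : ∀ i : Fin 2, pdm i q (ψ α) z =
      P * (α q * (z 0 q + u * z 1 q) ^ (α q - 1)) * (if i = 0 then 1 else u) := by
    intro i
    simp only [pdm, hf, ContinuousLinearMap.sum_apply, ContinuousLinearMap.smul_apply,
      smul_eq_mul]
    rw [Finset.sum_eq_single q]
    · rw [happ i 1]; simp [mul_assoc, hP]
    · intro j _ hj
      rw [happ i 1]; simp [hj]
    · simp
  rw [hpd 0, hpd 1]
  simp only [if_pos rfl, reduceIte, one_ne_zero]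
  -- now pure algebra plus product manipulation
  have hLHS : z 0 p * (P * (α q * (z 0 q + u * z 1 q) ^ (α q - 1)) * 1)
      + z 1 p * (P * (α q * (z 0 q + u * z 1 q) ^ (α q - 1)) * u)
      = α q * ((z 0 p + u * z 1 p) * ((z 0 q + u * z 1 q) ^ (α q - 1) * P)) := by ring
  rw [hLHS, hψ]
  congr 1
  have hq : (z 0 q + u * z 1 q) ^ (α q - 1) * P = (∏ j, (z 0 j + u * z 1 j) ^ (α j)) / (z 0 q + u * z 1 q) := by
    rw [Complex.cpow_sub _ _ (hne q), Complex.cpow_one, hP, ← Finset.mul_prod_erase _ _ (Finset.mem_univ q)]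
    field_simp
  have hβ : ∀ j, (z 0 j + u * z 1 j) ^ (((α + Pi.single p 1 - Pi.single q 1) : Fin N → ℂ) j)
      = (z 0 j + u * z 1 j) ^ (α j) * (z 0 j + u * z 1 j) ^ ((Pi.single p 1 : Fin N → ℂ) j)
        / (z 0 j + u * z 1 j) ^ ((Pi.single q 1 : Fin N → ℂ) j) := by
    intro j
    rw [Pi.sub_apply, Pi.add_apply, Complex.cpow_sub _ _ (hne j), Complex.cpow_add _ _ (hne j)]
  simp only [hβ]
  rw [Finset.prod_div_distrib, Finset.prod_mul_distrib]
  have hp1 : (∏ j, (z 0 j + u * z 1 j) ^ ((Pi.single p 1 : Fin N → ℂ) j)) = z 0 p + u * z 1 p := by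
    rw [Finset.prod_eq_single p]
    · simp
    · intro j _ hj; simp [Pi.single_eq_of_ne hj]
    · simp
  have hq1 : (∏ j, (z 0 j + u * z 1 j) ^ ((Pi.single q 1 : Fin N → ℂ) j)) = z 0 q + u * z 1 q := by
    rw [Finset.prod_eq_single q]
    · simp
    · intro j _ hj; simp [Pi.single_eq_of_ne hj]
    · simp
  rw [hp1, hq1, hq]
  ring
end

section
/- Let N ≥ 2, α ∈ ℂ^N, Ω ⊆ ℂ^N open, and Φ : Ω → ℂ holomorphic. Let Z' be the open set of z ∈ Mat(2×N, ℂ) with z_{2,j} ∈ ℂ∖ℝ_{≤0} for all j and x(z) := (z_{1,1}/z_{2,1}, …, z_{1,N}/z_{2,N}) ∈ Ω. Define F : Z' → ℂ by F(z) = (∏_{j=1}^N z_{2,j}^{α_j})·Φ(x(z)). Then for all 1 ≤ p ≠ q ≤ N and z ∈ Z': z_{2,p}·z_{2,q}·( ∂_{1,p}∂_{2,q}F(z) − ∂_{2,p}∂_{1,q}F(z) ) = (∏_{j=1}^N z_{2,j}^{α_j}) · [ (x_p − x_q)·∂_p∂_q Φ + α_q·∂_p Φ − α_p·∂_q Φ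 ](x(z)), where ∂_p = ∂/∂x_p and x = x(z). In particular □_{p,q}F = 0 at z if and only if Φ satisfies the Euler–Poisson–Darboux equation (x_p − x_q)∂_p∂_qΦ + α_q∂_pΦ − α_p∂_qΦ = 0 at x(z). -/
open Complex Finset

/-- Partial derivative of a function on `ℂ^N` with respect to the `p`-th coordinate. -/
noncomputable def pder {N : ℕ} (p : Fin N) (f : (Fin N → ℂ) → ℂ) : (Fin N → ℂ) → ℂ :=
  fun x => fderiv ℂ f x (Pi.single p (1 : ℂ))

namespace Stmt10Aux

variable {N : ℕ}

noncomputable def ell (i : Fin 2) (j : Fin N) : (Fin 2 → Fin N → ℂ) →L[ℂ] ℂ :=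
  (ContinuousLinearMap.proj j : (Fin N → ℂ) →L[ℂ] ℂ).comp
    (ContinuousLinearMap.proj i : (Fin 2 → Fin N → ℂ) →L[ℂ] (Fin N → ℂ))

lemma ell_single (i i' : Fin 2) (j p : Fin N) (c : ℂ) :
    ell i j (Pi.single i' (Pi.single p c)) = if i = i' ∧ j = p then c else 0 := by
  by_cases h : i = i' <;> by_cases h2 : j = p <;>
    simp [ell, Pi.single_apply, h, h2]

noncomputable def Pf (α : Fin N → ℂ) : (Fin 2 → Fin N → ℂ) → ℂ :=
  fun z => ∏ j, (z 1 j) ^ (α j)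

noncomputable def DP (α : Fin N → ℂ) (z : Fin 2 → Fin N → ℂ) :
    (Fin 2 → Fin N → ℂ) →L[ℂ] ℂ :=
  ∑ j, (∏ k ∈ Finset.univ.erase j, (z 1 k) ^ (α k)) • ((α j * (z 1 j) ^ (α j - 1)) • ell 1 j)

lemma hasFDerivAt_Pf (α : Fin N → ℂ) (z : Fin 2 → Fin N → ℂ)
    (hz : ∀ j, z 1 j ∈ slitPlane) : HasFDerivAt (Pf α) (DP α z) z :=
  HasFDerivAt.finset_prod (fun j _ => by
    have h := (Complex.hasStrictDerivAt_cpow_const (c := α j) (hz j)).hasDerivAt.comp_hasFDerivAt z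
      (ell 1 j).hasFDerivAt
    exact h)

lemma DP_single0 (α : Fin N → ℂ) (z : Fin 2 → Fin N → ℂ) (p : Fin N) (c : ℂ) :
    DP α z (Pi.single 0 (Pi.single p c)) = 0 := by
  simp [DP, ell_single, ContinuousLinearMap.sum_apply]

lemma DP_single1 (α : Fin N → ℂ) (z : Fin 2 → Fin N → ℂ) (p : Fin N)
    (hp : z 1 p ≠ 0) :
    DP α z (Pi.single 1 (Pi.single p 1)) = α p * Pf α z / z 1 p := by
  have h1 : Pf α z = (z 1 p) ^ (α p) * ∏ k ∈ Finset.univ.erase p, (z 1 k) ^ (α k) :=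
    (Finset.mul_prod_erase _ _ (Finset.mem_univ p)).symm
  have h2 : (z 1 p) ^ (α p - 1) = (z 1 p) ^ (α p) / z 1 p := by
    rw [Complex.cpow_sub _ _ hp, Complex.cpow_one]
  simp only [DP, ContinuousLinearMap.sum_apply, ContinuousLinearMap.smul_apply, smul_eq_mul]
  rw [Finset.sum_eq_single p]
  · rw [ell_single]; simp [h1, h2]; field_simp
  · intro b _ hb
    rw [ell_single]; simp [hb]
  · simp

noncomputable def Xf : (Fin 2 → Fin N → ℂ) → (Fin N → ℂ) := fun z j => z 0 j / z 1 j

noncomputable def DXj (z : Fin 2 → Fin N → ℂ) (j : Fin N) :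
    (Fin 2 → Fin N → ℂ) →L[ℂ] ℂ :=
  (z 0 j) • ((-((z 1 j) ^ 2)⁻¹) • ell 1 j) + ((z 1 j)⁻¹) • ell 0 j

noncomputable def DX (z : Fin 2 → Fin N → ℂ) :
    (Fin 2 → Fin N → ℂ) →L[ℂ] (Fin N → ℂ) :=
  ContinuousLinearMap.pi (fun j => DXj z j)

lemma hasFDerivAt_Xfj (z : Fin 2 → Fin N → ℂ) (j : Fin N) (hz : z 1 j ≠ 0) :
    HasFDerivAt (fun w : Fin 2 → Fin N → ℂ => w 0 j / w 1 j) (DXj z j) z := by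
  have h1 : HasFDerivAt (fun w : Fin 2 → Fin N → ℂ => (w 1 j)⁻¹)
      ((-((z 1 j) ^ 2)⁻¹) • ell 1 j) z :=
    (hasDerivAt_inv hz).comp_hasFDerivAt z (ell 1 j).hasFDerivAt
  have h2 := (ell 0 j).hasFDerivAt.mul h1
  simp only [ell] at h2 ⊢
  simpa [div_eq_mul_inv, DXj, ell, Pi.mul_def] using h2

lemma hasFDerivAt_Xf (z : Fin 2 → Fin N → ℂ) (hz : ∀ j, z 1 j ≠ 0) :
    HasFDerivAt (Xf (N := N)) (DX z) z :=
  hasFDerivAt_pi.mpr fun j => hasFDerivAt_Xfj z j (hz j)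

lemma DX_single0 (z : Fin 2 → Fin N → ℂ) (p : Fin N) :
    DX z (Pi.single 0 (Pi.single p 1)) = Pi.single p ((z 1 p)⁻¹) := by
  funext j
  by_cases h : j = p <;>
    simp [DX, DXj, ContinuousLinearMap.pi_apply, ell_single, h, Pi.single_apply]

lemma DX_single1 (z : Fin 2 → Fin N → ℂ) (p : Fin N) :
    DX z (Pi.single 1 (Pi.single p 1)) = Pi.single p (-(z 0 p * ((z 1 p) ^ 2)⁻¹)) := by
  funext j
  by_cases h : j = p <;>
    simp [DX, DXj, ContinuousLinearMap.pi_apply, ell_single, h, Pi.single_apply]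

lemma fderiv_single (f : (Fin N → ℂ) → ℂ) (x : Fin N → ℂ) (p : Fin N) (c : ℂ) :
    fderiv ℂ f x (Pi.single p c) = c * pder p f x := by
  have h : Pi.single p c = c • (Pi.single p (1 : ℂ) : Fin N → ℂ) := by
    funext j
    by_cases hj : j = p <;> simp [Pi.single_apply, hj]
  rw [h, map_smul, smul_eq_mul, pder]

lemma pder_comp_diff (Φ : (Fin N → ℂ) → ℂ) (x : Fin N → ℂ) (q : Fin N)
    (h : AnalyticAt ℂ Φ x) : DifferentiableAt ℂ (pder q Φ) x := by
  have h1 : AnalyticAt ℂ (fderiv ℂ Φ) x := h.fderiv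
  exact (ContinuousLinearMap.apply ℂ ℂ (Pi.single q (1 : ℂ))).differentiableAt.comp x
    h1.differentiableAt

lemma isOpen_U (Ω : Set (Fin N → ℂ)) (hΩ : IsOpen Ω) :
    IsOpen {z : Fin 2 → Fin N → ℂ | (∀ j, z 1 j ∈ slitPlane) ∧ Xf z ∈ Ω} := by
  rw [isOpen_iff_mem_nhds]
  rintro z ⟨hz, hm⟩
  have hzd : ∀ j, z 1 j ≠ 0 := fun j => slitPlane_ne_zero (hz j)
  have hV : {w : Fin 2 → Fin N → ℂ | ∀ j, w 1 j ∈ slitPlane} ∈ nhds z := by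
    have ho : IsOpen {w : Fin 2 → Fin N → ℂ | ∀ j, w 1 j ∈ slitPlane} := by
      have he : {w : Fin 2 → Fin N → ℂ | ∀ j, w 1 j ∈ slitPlane}
          = ⋂ j, (fun w : Fin 2 → Fin N → ℂ => w 1 j) ⁻¹' slitPlane := by
        ext w; simp
      rw [he]
      exact isOpen_iInter_of_finite fun j =>
        isOpen_slitPlane.preimage ((continuous_apply j).comp (continuous_apply 1))
    exact ho.mem_nhds hz
  have hcont : ContinuousAt (Xf (N := N)) z :=
    (hasFDerivAt_Xf z hzd).differentiableAt.continuousAt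
  exact Filter.inter_mem hV (hcont.preimage_mem_nhds (hΩ.mem_nhds hm))

variable (α : Fin N → ℂ) (Φ : (Fin N → ℂ) → ℂ)

lemma pdm0_F (z : Fin 2 → Fin N → ℂ) (hz : ∀ j, z 1 j ∈ slitPlane)
    (hd : DifferentiableAt ℂ Φ (Xf z)) (p : Fin N) :
    pdm 0 p (fun w => Pf α w * Φ (Xf w)) z
      = Pf α z * ((z 1 p)⁻¹ * pder p Φ (Xf z)) := by
  have hzd : ∀ j, z 1 j ≠ 0 := fun j => slitPlane_ne_zero (hz j)
  have hdF : HasFDerivAt (fun w => Pf α w * Φ (Xf w))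
      (Pf α z • ((fderiv ℂ Φ (Xf z)).comp (DX z)) + Φ (Xf z) • DP α z) z :=
    (hasFDerivAt_Pf α z hz).mul (hd.hasFDerivAt.comp z (hasFDerivAt_Xf z hzd))
  unfold pdm
  rw [hdF.fderiv]
  simp [ContinuousLinearMap.add_apply, ContinuousLinearMap.smul_apply,
    ContinuousLinearMap.coe_comp', Function.comp_apply, DP_single0, DX_single0,
    fderiv_single, smul_eq_mul]

lemma pdm1_F (z : Fin 2 → Fin N → ℂ) (hz : ∀ j, z 1 j ∈ slitPlane)
    (hd : DifferentiableAt ℂ Φ (Xf z)) (q : Fin N) :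
    pdm 1 q (fun w => Pf α w * Φ (Xf w)) z
      = Pf α z * ((z 1 q)⁻¹ * (α q * Φ (Xf z) - Xf z q * pder q Φ (Xf z))) := by
  have hzd : ∀ j, z 1 j ≠ 0 := fun j => slitPlane_ne_zero (hz j)
  have hdF : HasFDerivAt (fun w => Pf α w * Φ (Xf w))
      (Pf α z • ((fderiv ℂ Φ (Xf z)).comp (DX z)) + Φ (Xf z) • DP α z) z :=
    (hasFDerivAt_Pf α z hz).mul (hd.hasFDerivAt.comp z (hasFDerivAt_Xf z hzd))
  unfold pdm
  rw [hdF.fderiv]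
  simp only [ContinuousLinearMap.add_apply, ContinuousLinearMap.smul_apply,
    ContinuousLinearMap.coe_comp', Function.comp_apply, DP_single1 α z q (hzd q),
    DX_single1, fderiv_single, smul_eq_mul]
  have hxq : Xf z q = z 0 q / z 1 q := rfl
  rw [hxq]
  field_simp [hzd q]
  ring

lemma pdm01 {N : ℕ} (α : Fin N → ℂ) (Ω : Set (Fin N → ℂ)) (hΩ : IsOpen Ω)
    (Φ : (Fin N → ℂ) → ℂ) (hΦ : AnalyticOnNhd ℂ Φ Ω)
    (z : Fin 2 → Fin N → ℂ) (hz : ∀ j, z 1 j ∈ Complex.slitPlane) (hm : Xf z ∈ Ω)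
    (p q : Fin N) (hpq : p ≠ q) :
    pdm 0 p (pdm 1 q (fun w => Pf α w * Φ (Xf w))) z
      = Pf α z * ((z 1 q)⁻¹ * (α q * ((z 1 p)⁻¹ * pder p Φ (Xf z))
          - Xf z q * ((z 1 p)⁻¹ * pder p (pder q Φ) (Xf z)))) := by
  have hzd : ∀ j, z 1 j ≠ 0 := fun j => Complex.slitPlane_ne_zero (hz j)
  have hU := isOpen_U Ω hΩ (N := N)
  have hEv : pdm 1 q (fun w => Pf α w * Φ (Xf w))
      =ᶠ[nhds z] fun w => Pf α w * ((w 1 q)⁻¹ * (α q * Φ (Xf w) - Xf w q * pder q Φ (Xf w))) := by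
    filter_upwards [hU.mem_nhds ⟨hz, hm⟩] with w hw
    exact pdm1_F α Φ w hw.1 ((hΦ _ hw.2).differentiableAt) q
  have hgoal : pdm 0 p (pdm 1 q (fun w => Pf α w * Φ (Xf w))) z
      = fderiv ℂ (fun w => Pf α w * ((w 1 q)⁻¹ *
          (α q * Φ (Xf w) - Xf w q * pder q Φ (Xf w)))) z (Pi.single 0 (Pi.single p 1)) := by
    show fderiv ℂ (pdm 1 q fun w => Pf α w * Φ (Xf w)) z _ = _
    rw [hEv.fderiv_eq]
  rw [hgoal]
  have hXd := hasFDerivAt_Xf z hzd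
  have hΦa := hΦ _ hm
  have hΦX : HasFDerivAt (fun w => Φ (Xf w)) ((fderiv ℂ Φ (Xf z)).comp (DX z)) z :=
    hΦa.differentiableAt.hasFDerivAt.comp z hXd
  have hψX : HasFDerivAt (fun w => pder q Φ (Xf w))
      ((fderiv ℂ (pder q Φ) (Xf z)).comp (DX z)) z :=
    (pder_comp_diff Φ _ q hΦa).hasFDerivAt.comp z hXd
  have hinvq : HasFDerivAt (fun w : Fin 2 → Fin N → ℂ => (w 1 q)⁻¹)
      ((-((z 1 q) ^ 2)⁻¹) • ell 1 q) z :=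
    (hasDerivAt_inv (hzd q)).comp_hasFDerivAt z (ell 1 q).hasFDerivAt
  have hxq : HasFDerivAt (fun w : Fin 2 → Fin N → ℂ => Xf w q) (DXj z q) z :=
    hasFDerivAt_Xfj z q (hzd q)
  have hG : HasFDerivAt
      (fun w => Pf α w * ((w 1 q)⁻¹ * (α q * Φ (Xf w) - Xf w q * pder q Φ (Xf w))))
      (Pf α z • ((z 1 q)⁻¹ • (((α q) • ((fderiv ℂ Φ (Xf z)).comp (DX z)))
          - (Xf z q • ((fderiv ℂ (pder q Φ) (Xf z)).comp (DX z))
             + pder q Φ (Xf z) • DXj z q))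
        + (α q * Φ (Xf z) - Xf z q * pder q Φ (Xf z)) • ((-((z 1 q) ^ 2)⁻¹) • ell 1 q))
       + ((z 1 q)⁻¹ * (α q * Φ (Xf z) - Xf z q * pder q Φ (Xf z))) • DP α z) z :=
    (hasFDerivAt_Pf α z hz).mul (hinvq.mul ((hΦX.const_mul (α q)).sub (hxq.mul hψX)))
  rw [hG.fderiv]
  have e1 : ell 1 q (Pi.single (0 : Fin 2) (Pi.single p (1 : ℂ))) = 0 := by
    rw [ell_single]; simp
  have e2 : ell 0 q (Pi.single (0 : Fin 2) (Pi.single p (1 : ℂ))) = 0 := by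
    rw [ell_single]; simp [Ne.symm hpq]
  simp only [ContinuousLinearMap.add_apply, ContinuousLinearMap.sub_apply,
    ContinuousLinearMap.smul_apply, ContinuousLinearMap.coe_comp', Function.comp_apply,
    DP_single0, DX_single0, fderiv_single, smul_eq_mul, DXj, e1, e2]
  ring

lemma pdm10 {N : ℕ} (α : Fin N → ℂ) (Ω : Set (Fin N → ℂ)) (hΩ : IsOpen Ω)
    (Φ : (Fin N → ℂ) → ℂ) (hΦ : AnalyticOnNhd ℂ Φ Ω)
    (z : Fin 2 → Fin N → ℂ) (hz : ∀ j, z 1 j ∈ Complex.slitPlane) (hm : Xf z ∈ Ω)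
    (p q : Fin N) (hpq : p ≠ q) :
    pdm 1 p (pdm 0 q (fun w => Pf α w * Φ (Xf w))) z
      = Pf α z * ((z 1 q)⁻¹ * ((-(z 0 p * ((z 1 p) ^ 2)⁻¹)) * pder p (pder q Φ) (Xf z)))
        + ((z 1 q)⁻¹ * pder q Φ (Xf z)) * (α p * Pf α z / z 1 p) := by
  have hzd : ∀ j, z 1 j ≠ 0 := fun j => Complex.slitPlane_ne_zero (hz j)
  have hU := isOpen_U Ω hΩ (N := N)
  have hEv : pdm 0 q (fun w => Pf α w * Φ (Xf w))
      =ᶠ[nhds z] fun w => Pf α w * ((w 1 q)⁻¹ * pder q Φ (Xf w)) := by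
    filter_upwards [hU.mem_nhds ⟨hz, hm⟩] with w hw
    exact pdm0_F α Φ w hw.1 ((hΦ _ hw.2).differentiableAt) q
  have hgoal : pdm 1 p (pdm 0 q (fun w => Pf α w * Φ (Xf w))) z
      = fderiv ℂ (fun w => Pf α w * ((w 1 q)⁻¹ * pder q Φ (Xf w))) z
          (Pi.single 1 (Pi.single p 1)) := by
    show fderiv ℂ (pdm 0 q fun w => Pf α w * Φ (Xf w)) z _ = _
    rw [hEv.fderiv_eq]
  rw [hgoal]
  have hXd := hasFDerivAt_Xf z hzd
  have hΦa := hΦ _ hm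
  have hψX : HasFDerivAt (fun w => pder q Φ (Xf w))
      ((fderiv ℂ (pder q Φ) (Xf z)).comp (DX z)) z :=
    (pder_comp_diff Φ _ q hΦa).hasFDerivAt.comp z hXd
  have hinvq : HasFDerivAt (fun w : Fin 2 → Fin N → ℂ => (w 1 q)⁻¹)
      ((-((z 1 q) ^ 2)⁻¹) • ell 1 q) z :=
    (hasDerivAt_inv (hzd q)).comp_hasFDerivAt z (ell 1 q).hasFDerivAt
  have hG : HasFDerivAt (fun w => Pf α w * ((w 1 q)⁻¹ * pder q Φ (Xf w)))
      (Pf α z • ((z 1 q)⁻¹ • ((fderiv ℂ (pder q Φ) (Xf z)).comp (DX z))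
          + pder q Φ (Xf z) • ((-((z 1 q) ^ 2)⁻¹) • ell 1 q))
        + ((z 1 q)⁻¹ * pder q Φ (Xf z)) • DP α z) z :=
    (hasFDerivAt_Pf α z hz).mul (hinvq.mul hψX)
  rw [hG.fderiv]
  have e1 : ell 1 q (Pi.single (1 : Fin 2) (Pi.single p (1 : ℂ))) = 0 := by
    rw [ell_single]; simp [Ne.symm hpq]
  simp only [ContinuousLinearMap.add_apply, ContinuousLinearMap.smul_apply,
    ContinuousLinearMap.coe_comp', Function.comp_apply, DP_single1 α z p (hzd p),
    DX_single1, fderiv_single, smul_eq_mul, e1]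
  ring

lemma alg (A B C P zp zq z0p z0q aq ap : ℂ) (hp : zp ≠ 0) (hq : zq ≠ 0) :
    zp * zq * (P * (zq⁻¹ * (aq * (zp⁻¹ * A) - (z0q / zq) * (zp⁻¹ * C))) -
      (P * (zq⁻¹ * (-(z0p * (zp ^ 2)⁻¹) * C)) + zq⁻¹ * B * (ap * P / zp)))
    = P * ((z0p / zp - z0q / zq) * C + aq * A - ap * B) := by
  rw [div_eq_mul_inv, div_eq_mul_inv, div_eq_mul_inv, pow_two, mul_inv]
  have h1 : zp * zp⁻¹ = 1 := mul_inv_cancel₀ hp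
  have h2 : zq * zq⁻¹ = 1 := mul_inv_cancel₀ hq
  linear_combination
    (P * ((z0p * zp⁻¹ - z0q * zq⁻¹) * C + aq * A - ap * B)) * (zq * zq⁻¹) * h1
    + (P * ((z0p * zp⁻¹ - z0q * zq⁻¹) * C + aq * A - ap * B)) * h2

end Stmt10Aux

/-- Proposition 3.6: the reduction of the Gelfand hypergeometric system.  For
`F(z) = (∏_j z_{2,j}^{α_j})·Φ(x(z))` with `x(z)_j = z_{1,j}/z_{2,j}`, one has
`z_{2,p}z_{2,q}·□_{p,q}F(z) = (∏_j z_{2,j}^{α_j})·[(x_p−x_q)∂_p∂_qΦ + α_q∂_pΦ − α_p∂_qΦ](x(z))`;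
in particular `□_{p,q}F = 0` at `z` iff `Φ` satisfies the Euler–Poisson–Darboux equation
at `x(z)`. -/
theorem stmt_10 {N : ℕ} (hN : 2 ≤ N) (α : Fin N → ℂ)
    (Ω : Set (Fin N → ℂ)) (hΩ : IsOpen Ω)
    (Φ : (Fin N → ℂ) → ℂ) (hΦ : AnalyticOnNhd ℂ Φ Ω)
    (F : (Fin 2 → Fin N → ℂ) → ℂ)
    (hF : F = fun z => (∏ j, (z 1 j) ^ (α j)) * Φ (fun j => z 0 j / z 1 j)) :
    ∀ p q : Fin N, p ≠ q → ∀ z : Fin 2 → Fin N → ℂ,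
      (∀ j, z 1 j ∈ Complex.slitPlane) →
      ∀ x : Fin N → ℂ, x = (fun j => z 0 j / z 1 j) → x ∈ Ω →
      (z 1 p * z 1 q * (pdm 0 p (pdm 1 q F) z - pdm 1 p (pdm 0 q F) z)
        = (∏ j, (z 1 j) ^ (α j)) *
          ((x p - x q) * pder p (pder q Φ) x + α q * pder p Φ x - α p * pder q Φ x)) ∧
      ((pdm 0 p (pdm 1 q F) z - pdm 1 p (pdm 0 q F) z = 0) ↔
        (x p - x q) * pder p (pder q Φ) x + α q * pder p Φ x - α p * pder q Φ x = 0) := by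
  intro p q hpq z hz x hx hxΩ
  subst hF
  subst hx
  have eF : (fun z : Fin 2 → Fin N → ℂ =>
      (∏ j, (z 1 j) ^ (α j)) * Φ (fun j => z 0 j / z 1 j))
      = fun w => Stmt10Aux.Pf α w * Φ (Stmt10Aux.Xf w) := rfl
  have eX : (fun j => z 0 j / z 1 j) = Stmt10Aux.Xf z := rfl
  have eP : (∏ j, (z 1 j) ^ (α j)) = Stmt10Aux.Pf α z := rfl
  have hzd : ∀ j, z 1 j ≠ 0 := fun j => Complex.slitPlane_ne_zero (hz j)
  have hm : Stmt10Aux.Xf z ∈ Ω := hxΩ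
  have h1 := Stmt10Aux.pdm01 α Ω hΩ Φ hΦ z hz hm p q hpq
  have h2 := Stmt10Aux.pdm10 α Ω hΩ Φ hΦ z hz hm p q hpq
  rw [eF, eX, eP]
  have hPne : Stmt10Aux.Pf α z ≠ 0 := by
    refine Finset.prod_ne_zero_iff.mpr fun j _ => ?_
    intro h
    exact hzd j ((Complex.cpow_eq_zero_iff _ _).mp h).1
  have main : z 1 p * z 1 q *
      (pdm 0 p (pdm 1 q fun w => Stmt10Aux.Pf α w * Φ (Stmt10Aux.Xf w)) z
        - pdm 1 p (pdm 0 q fun w => Stmt10Aux.Pf α w * Φ (Stmt10Aux.Xf w)) z)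
      = Stmt10Aux.Pf α z *
        ((Stmt10Aux.Xf z p - Stmt10Aux.Xf z q) * pder p (pder q Φ) (Stmt10Aux.Xf z)
          + α q * pder p Φ (Stmt10Aux.Xf z) - α p * pder q Φ (Stmt10Aux.Xf z)) := by
    rw [h1, h2]
    simp only [Stmt10Aux.Xf]
    exact Stmt10Aux.alg _ _ _ _ _ _ _ _ _ _ (hzd p) (hzd q)
  refine ⟨main, ?_⟩
  constructor
  · intro h0
    rw [h0, mul_zero] at main
    rcases mul_eq_zero.mp main.symm with h | h
    · exact absurd h hPne
    · exact h
  · intro h0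
    rw [h0, mul_zero] at main
    have hne : z 1 p * z 1 q ≠ 0 := mul_ne_zero (hzd p) (hzd q)
    rcases mul_eq_zero.mp main with h | h
    · exact absurd h hne
    · exact h
end

section
/- Let N ≥ 2, α ∈ ℂ^N, u ∈ ℂ fixed, and Ω := {x ∈ ℂ^N : u + x_k ∈ ℂ∖ℝ_{≤0} for all k}. For β ∈ ℂ^N define φ_β : Ω → ℂ by φ_β(x) = ∏_{k=1}^N (u + x_k)^{β_k} (complex powers). Then for all 1 ≤ p ≠ q ≤ N and x ∈ Ω: (i) (x_p − x_q)·∂_p∂_q φ_α(x) + α_q·∂_p φ_α(x) − α_p·∂_q φ_α(x) = 0 (φ_α satisfies the whole system of Euler–Poisson–Darboux equations); (ii) (x_p − x_q)·∂_q φ_α(x) + α_q·φ_α(x) = α_q·φ_{α + e_p − e_q}(x) (the contiguity relation), where e_p is the p-th standard unit vector and ∂_p = ∂/∂x_p. -/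
open Complex Finset in
lemma key_s11 {N : ℕ} (u : ℂ) (β : Fin N → ℂ) (x : Fin N → ℂ)
    (hx : ∀ k, u + x k ∈ Complex.slitPlane) :
    HasFDerivAt (fun y : Fin N → ℂ => ∏ k, (u + y k) ^ (β k))
      (∑ k, (∏ j ∈ Finset.univ.erase k, (u + x j) ^ (β j)) •
        ((β k * (u + x k) ^ (β k - 1)) • (ContinuousLinearMap.proj k :
          (Fin N → ℂ) →L[ℂ] ℂ))) x := by
  apply HasFDerivAt.finset_prod
  intro k _
  have h1 : HasDerivAt (fun z : ℂ => (u + z) ^ (β k)) (β k * (u + x k) ^ (β k - 1)) (x k) := by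
    have := HasDerivAt.cpow_const (c := β k) ((hasDerivAt_id (x k)).const_add u) (hx k)
    simpa using this
  have h2 := h1.hasFDerivAt.comp x
    (ContinuousLinearMap.proj k : (Fin N → ℂ) →L[ℂ] ℂ).hasFDerivAt
  exact h2.congr_fderiv (by ext v; simp [mul_comm])


lemma pder_eq {N : ℕ} (u : ℂ) (β : Fin N → ℂ) (x : Fin N → ℂ)
    (hx : ∀ k, u + x k ∈ Complex.slitPlane) (p : Fin N) :
    pder p (fun y : Fin N → ℂ => ∏ k, (u + y k) ^ (β k)) x
      = β p * (u + x p) ^ (β p - 1) * ∏ j ∈ Finset.univ.erase p, (u + x j) ^ (β j) := by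
  rw [pder, (key_s11 u β x hx).fderiv]
  simp [Pi.single_apply, mul_ite, Finset.sum_ite_eq']
  ring


/-- Pointwise version of Propositions 3.6 and 3.8: the integrand
`φ_β(x) = ∏_k (u + x_k)^{β_k}` of the restricted Gelfand hypergeometric function satisfies
(i) the Euler–Poisson–Darboux system
`(x_p − x_q)∂_p∂_qφ_α + α_q∂_pφ_α − α_p∂_qφ_α = 0` and
(ii) the contiguity relation `(x_p − x_q)∂_qφ_α + α_q·φ_α = α_q·φ_{α+e_p−e_q}`
on the open set where each `u + x_k` lies in the slit plane. -/
theorem stmt_11 {N : ℕ} (hN : 2 ≤ N) (α : Fin N → ℂ) (u : ℂ)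
    (φ : (Fin N → ℂ) → (Fin N → ℂ) → ℂ)
    (hφ : ∀ β : Fin N → ℂ, φ β = fun x => ∏ k, (u + x k) ^ (β k)) :
    ∀ p q : Fin N, p ≠ q → ∀ x : Fin N → ℂ,
      (∀ k, u + x k ∈ Complex.slitPlane) →
      ((x p - x q) * pder p (pder q (φ α)) x
          + α q * pder p (φ α) x - α p * pder q (φ α) x = 0) ∧
      ((x p - x q) * pder q (φ α) x + α q * φ α x
          = α q * φ (α + Pi.single p 1 - Pi.single q 1) x) := by
  intro p q hpq x hx
  classical
  set c := u + x p with hc_def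
  set d := u + x q with hd_def
  have hc : c ≠ 0 := Complex.slitPlane_ne_zero (hx p)
  have hd : d ≠ 0 := Complex.slitPlane_ne_zero (hx q)
  set P : ℂ := ∏ j ∈ (Finset.univ.erase p).erase q, (u + x j) ^ (α j) with hP
  have hqp : q ∈ Finset.univ.erase p := Finset.mem_erase.2 ⟨hpq.symm, Finset.mem_univ q⟩
  have hpq' : p ∈ Finset.univ.erase q := Finset.mem_erase.2 ⟨hpq, Finset.mem_univ p⟩
  -- product over erase p
  have hEp : ∏ j ∈ Finset.univ.erase p, (u + x j) ^ (α j) = d ^ (α q) * P := by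
    rw [← Finset.mul_prod_erase _ _ hqp]
  -- product over erase q
  have hEq : ∏ j ∈ Finset.univ.erase q, (u + x j) ^ (α j) = c ^ (α p) * P := by
    rw [← Finset.mul_prod_erase _ _ hpq', hP, Finset.erase_right_comm]
  -- first partials
  have hdp : pder p (φ α) x = α p * c ^ (α p - 1) * (d ^ (α q) * P) := by
    rw [hφ α, pder_eq u α x hx p, hEp]
  have hdq : pder q (φ α) x = α q * d ^ (α q - 1) * (c ^ (α p) * P) := by
    rw [hφ α, pder_eq u α x hx q, hEq]
  -- the shifted exponent for the second derivative
  set β' : Fin N → ℂ := Function.update α q (α q - 1) with hβ'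
  -- locally, pder q (φ α) = α q * φ_{β'}
  have hΩ : IsOpen {y : Fin N → ℂ | ∀ k, u + y k ∈ Complex.slitPlane} := by
    have : {y : Fin N → ℂ | ∀ k, u + y k ∈ Complex.slitPlane} =
        ⋂ k, (fun y : Fin N → ℂ => u + y k) ⁻¹' Complex.slitPlane := by
      ext y; simp
    rw [this]
    exact isOpen_iInter_of_finite fun k =>
      Complex.isOpen_slitPlane.preimage (by fun_prop)
  have hloc : pder q (φ α) =ᶠ[nhds x]
      fun y => α q * ∏ k, (u + y k) ^ (β' k) := by
    filter_upwards [hΩ.mem_nhds hx] with y hy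
    rw [hφ α, pder_eq u α y hy q]
    rw [← Finset.mul_prod_erase Finset.univ (fun k => (u + y k) ^ (β' k))
      (Finset.mem_univ q)]
    have h1 : β' q = α q - 1 := Function.update_self _ _ _
    have h2 : ∏ j ∈ Finset.univ.erase q, (u + y j) ^ (β' j)
        = ∏ j ∈ Finset.univ.erase q, (u + y j) ^ (α j) := by
      refine Finset.prod_congr rfl fun j hj => ?_
      rw [hβ', Function.update_of_ne (Finset.mem_erase.1 hj).1]
    rw [h1, h2]; ring
  -- second partial
  have hψ : DifferentiableAt ℂ (fun y : Fin N → ℂ => ∏ k, (u + y k) ^ (β' k)) x :=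
    (key_s11 u β' x hx).differentiableAt
  have hdpq : pder p (pder q (φ α)) x
      = α q * (α p * c ^ (α p - 1) * (d ^ (α q - 1) * P)) := by
    have e0 : pder p (pder q (φ α)) x
        = fderiv ℂ (pder q (φ α)) x (Pi.single p 1) := rfl
    rw [e0, hloc.fderiv_eq, fderiv_const_mul hψ]
    have e2 : fderiv ℂ (fun y : Fin N → ℂ => ∏ k, (u + y k) ^ (β' k)) x
        (Pi.single p 1) = pder p (fun y : Fin N → ℂ => ∏ k, (u + y k) ^ (β' k)) x := rfl
    simp only [ContinuousLinearMap.smul_apply, smul_eq_mul]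
    rw [e2, pder_eq u β' x hx p]
    have h1 : β' p = α p := Function.update_of_ne hpq _ _
    have h2 : ∏ j ∈ Finset.univ.erase p, (u + x j) ^ (β' j)
        = d ^ (α q - 1) * P := by
      rw [← Finset.mul_prod_erase _ _ hqp]
      have h3 : β' q = α q - 1 := Function.update_self _ _ _
      have h4 : ∏ j ∈ (Finset.univ.erase p).erase q, (u + x j) ^ (β' j) = P := by
        refine Finset.prod_congr rfl fun j hj => ?_
        rw [hβ', Function.update_of_ne (Finset.mem_erase.1 hj).1]
      rw [h3, h4]
    rw [h1, h2]
  -- the shifted φ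
  set α' : Fin N → ℂ := α + Pi.single p 1 - Pi.single q 1 with hα'
  have hφα' : φ α' x = c ^ (α p) * c * (d ^ (α q - 1) * P) := by
    simp only [hφ α']
    rw [← Finset.mul_prod_erase Finset.univ (fun k => (u + x k) ^ (α' k))
      (Finset.mem_univ p), ← Finset.mul_prod_erase _ (fun k => (u + x k) ^ (α' k)) hqp]
    have h1 : α' p = α p + 1 := by
      simp [hα', Pi.single_apply, hpq, hpq.symm]
    have h2 : α' q = α q - 1 := by
      simp [hα', Pi.single_apply, hpq, hpq.symm]
    have h3 : ∏ j ∈ (Finset.univ.erase p).erase q, (u + x j) ^ (α' j) = P := by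
      refine Finset.prod_congr rfl fun j hj => ?_
      have hj1 := (Finset.mem_erase.1 hj).1
      have hj2 := (Finset.mem_erase.1 (Finset.mem_erase.1 hj).2).1
      simp [hα', Pi.single_apply, hj1, hj2]
    rw [h1, h2, h3, Complex.cpow_add _ _ hc, Complex.cpow_one]
    try ring
  have hφαx : φ α x = c ^ (α p) * (d ^ (α q - 1) * d * P) := by
    simp only [hφ α]
    rw [← Finset.mul_prod_erase Finset.univ (fun k => (u + x k) ^ (α k))
      (Finset.mem_univ p), hEp]
    have : d ^ (α q) = d ^ (α q - 1) * d := by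
      conv_lhs => rw [show α q = (α q - 1) + 1 by ring]
      rw [Complex.cpow_add _ _ hd, Complex.cpow_one]
    rw [this]
    try ring
  have hcc : c ^ (α p) = c ^ (α p - 1) * c := by
    conv_lhs => rw [show α p = (α p - 1) + 1 by ring]
    rw [Complex.cpow_add _ _ hc, Complex.cpow_one]
  have hdd : d ^ (α q) = d ^ (α q - 1) * d := by
    conv_lhs => rw [show α q = (α q - 1) + 1 by ring]
    rw [Complex.cpow_add _ _ hd, Complex.cpow_one]
  have hxpq : x p - x q = c - d := by rw [hc_def, hd_def]; ring
  constructor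
  · rw [hdpq, hdp, hdq, hxpq, hcc, hdd]; ring
  · rw [hdq, hφα', hφαx, hxpq, hcc]; ring
end

section
/- Let N ≥ 3, α ∈ ℂ^N, let Ω ⊆ {x ∈ ℂ^N : x_a ≠ x_b for all a ≠ b} be open, and let u : Ω → ℂ be holomorphic (three times differentiable). For distinct indices p, q write M_{p,q}(α)u := ∂_p∂_q u + (α_q/(x_p − x_q))·∂_p u + (α_p/(x_q − x_p))·∂_q u. Then for any pairwise distinct 1 ≤ i, j, k ≤ N and all x ∈ Ω: ∂_k( M_{i,j}(α)u ) − ∂_i( M_{j,k}(α)u ) = −α_j·( (x_k − x_i)/((x_i − x_j)(x_j − x_k)) )·M_{i,k}(α)u − (α_k/(x_j − x_k))·M_{i,j}(α)u − (α_i/(x_i − x_j))·M_{j,k}(α)u. -/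
/-- The Euler–Poisson–Darboux operator
`M_{p,q}(α) = ∂_p∂_q + (α_q/(x_p−x_q))∂_p + (α_p/(x_q−x_p))∂_q`. -/
noncomputable def Mop {N : ℕ} (α : Fin N → ℂ) (p q : Fin N) (f : (Fin N → ℂ) → ℂ) :
    (Fin N → ℂ) → ℂ :=
  fun x => pder p (pder q f) x + (α q / (x p - x q)) * pder p f x
    + (α p / (x q - x p)) * pder q f x

/-- The continuous linear map `y ↦ y a - y b`. -/
noncomputable def Lab {N : ℕ} (a b : Fin N) : (Fin N → ℂ) →L[ℂ] ℂ :=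
  (ContinuousLinearMap.proj (R := ℂ) (φ := fun _ : Fin N => ℂ) a)
    - (ContinuousLinearMap.proj (R := ℂ) (φ := fun _ : Fin N => ℂ) b)

variable {N : ℕ}

lemma coeff_hasFDerivAt (c : ℂ) (a b : Fin N) {x : Fin N → ℂ} (hab : x a - x b ≠ 0) :
    HasFDerivAt (fun y : Fin N → ℂ => c / (y a - y b))
      (c • ((-ContinuousLinearMap.mulLeftRight ℂ ℂ (x a - x b)⁻¹ (x a - x b)⁻¹).comp
        (Lab a b))) x := by
  have hL : HasFDerivAt (fun y : Fin N → ℂ => y a - y b) (Lab a b) x :=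
    (Lab a b).hasFDerivAt
  have hinv : HasFDerivAt (fun y : Fin N → ℂ => (y a - y b)⁻¹)
      ((-ContinuousLinearMap.mulLeftRight ℂ ℂ (x a - x b)⁻¹ (x a - x b)⁻¹).comp (Lab a b)) x :=
    (hasFDerivAt_inv' hab).comp x hL
  simpa [div_eq_mul_inv] using hinv.const_mul c

lemma coeff_diff (c : ℂ) (a b : Fin N) {x : Fin N → ℂ} (hab : x a - x b ≠ 0) :
    DifferentiableAt ℂ (fun y : Fin N → ℂ => c / (y a - y b)) x :=
  (coeff_hasFDerivAt c a b hab).differentiableAt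

lemma coeff_pder_zero (c : ℂ) (a b r : Fin N) (hra : r ≠ a) (hrb : r ≠ b)
    {x : Fin N → ℂ} (hab : x a - x b ≠ 0) :
    fderiv ℂ (fun y : Fin N → ℂ => c / (y a - y b)) x (Pi.single r (1:ℂ)) = 0 := by
  rw [(coeff_hasFDerivAt c a b hab).fderiv]
  simp [Lab, Pi.single_eq_of_ne (Ne.symm hra), Pi.single_eq_of_ne (Ne.symm hrb)]

lemma analyticOnNhd_pder (p : Fin N) {f : (Fin N → ℂ) → ℂ} {Ω : Set (Fin N → ℂ)}
    (hf : AnalyticOnNhd ℂ f Ω) : AnalyticOnNhd ℂ (pder p f) Ω := by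
  intro x hx
  exact ((ContinuousLinearMap.apply ℂ ℂ (Pi.single p (1:ℂ))).analyticAt _).comp
    (hf.fderiv x hx)

lemma pder_pder_eq {f : (Fin N → ℂ) → ℂ} {x : Fin N → ℂ}
    (hf : AnalyticAt ℂ (fderiv ℂ f) x) (p q : Fin N) :
    pder p (pder q f) x = fderiv ℂ (fderiv ℂ f) x (Pi.single p 1) (Pi.single q 1) := by
  have h : pder q f = (ContinuousLinearMap.apply ℂ ℂ (Pi.single q (1:ℂ))) ∘ (fderiv ℂ f) := rfl
  show fderiv ℂ (pder q f) x (Pi.single p 1) = _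
  rw [h, fderiv_comp x (ContinuousLinearMap.differentiableAt _) hf.differentiableAt]
  simp

lemma pder_comm {f : (Fin N → ℂ) → ℂ} {Ω : Set (Fin N → ℂ)}
    (hf : AnalyticOnNhd ℂ f Ω) (p q : Fin N) {x : Fin N → ℂ} (hx : x ∈ Ω) :
    pder p (pder q f) x = pder q (pder p f) x := by
  have hfd : AnalyticAt ℂ (fderiv ℂ f) x := hf.fderiv x hx
  have hsymm : IsSymmSndFDerivAt ℂ f x := by
    have : ContDiffAt ℂ 2 f x := (hf x hx).contDiffAt
    exact this.isSymmSndFDerivAt (by norm_num)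
  rw [pder_pder_eq hfd, pder_pder_eq hfd, hsymm]

lemma key_lemma (α : Fin N → ℂ) {u : (Fin N → ℂ) → ℂ} {Ω : Set (Fin N → ℂ)}
    (hu : AnalyticOnNhd ℂ u Ω)
    (p q r : Fin N) {x : Fin N → ℂ} (hx : x ∈ Ω)
    (hrp : r ≠ p) (hrq : r ≠ q) (hpq : x p - x q ≠ 0) :
    pder r (fun y => pder p (pder q u) y + (α q / (y p - y q)) * pder p u y
      + (α p / (y q - y p)) * pder q u y) x
    = pder r (pder p (pder q u)) x
      + (α q / (x p - x q)) * pder r (pder p u) x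
      + (α p / (x q - x p)) * pder r (pder q u) x := by
  have hqp : x q - x p ≠ 0 := fun h => hpq (by linear_combination -h)
  have h1 : DifferentiableAt ℂ (pder p (pder q u)) x :=
    (analyticOnNhd_pder p (analyticOnNhd_pder q hu) x hx).differentiableAt
  have h2 : DifferentiableAt ℂ (fun y : Fin N → ℂ => α q / (y p - y q)) x :=
    coeff_diff _ p q hpq
  have h3 : DifferentiableAt ℂ (pder p u) x :=
    (analyticOnNhd_pder p hu x hx).differentiableAt
  have h4 : DifferentiableAt ℂ (fun y : Fin N → ℂ => α p / (y q - y p)) x :=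
    coeff_diff _ q p hqp
  have h5 : DifferentiableAt ℂ (pder q u) x :=
    (analyticOnNhd_pder q hu x hx).differentiableAt
  show fderiv ℂ _ x (Pi.single r 1) = _
  rw [fderiv_fun_add (f := fun y => pder p (pder q u) y + α q / (y p - y q) * pder p u y)
      (g := fun y => α p / (y q - y p) * pder q u y) (h1.add (h2.mul h3)) (h4.mul h5),
    fderiv_fun_add (g := fun y => α q / (y p - y q) * pder p u y) h1 (h2.mul h3),
    fderiv_fun_mul h2 h3, fderiv_fun_mul h4 h5]
  simp only [ContinuousLinearMap.add_apply, ContinuousLinearMap.smul_apply, smul_eq_mul]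
  rw [coeff_pder_zero _ p q r hrp hrq hpq, coeff_pder_zero _ q p r hrq hrp hqp]
  show pder r (pder p (pder q u)) x + (α q / (x p - x q) * pder r (pder p u) x
    + pder p u x * 0) + (α p / (x q - x p) * pder r (pder q u) x + pder q u x * 0) = _
  ring


lemma alg_identity (a b c αi αj αk D1 D2 D3 Dij Dik Djk T : ℂ)
    (hab : a - b ≠ 0) (hbc : b - c ≠ 0) (hac : a - c ≠ 0) :
    T + αj/(a-b)*Dik + αi/(b-a)*Djk - (T + αk/(b-c)*Dij + αj/(c-b)*Dik)
    = -αj*((c-a)/((a-b)*(b-c)))*(Dik + αk/(a-c)*D1 + αi/(c-a)*D3)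
      - αk/(b-c)*(Dij + αj/(a-b)*D1 + αi/(b-a)*D2)
      - αi/(a-b)*(Djk + αk/(b-c)*D2 + αj/(c-b)*D3) := by
  have hba : b - a ≠ 0 := fun h => hab (by linear_combination -h)
  have hcb : c - b ≠ 0 := fun h => hbc (by linear_combination -h)
  have hca : c - a ≠ 0 := fun h => hac (by linear_combination -h)
  have cik : αj/(a-b) - αj/(c-b) = -αj*((c-a)/((a-b)*(b-c))) + αj/(b-c) - αj/(b-c) := by
    field_simp
    ring
  have cjk : αi/(b-a) = -(αi/(a-b)) := by
    field_simp
    all_goals ring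
  have cD1 : (0:ℂ) = -αj*((c-a)/((a-b)*(b-c)))*(αk/(a-c)) - αk/(b-c)*(αj/(a-b)) := by
    field_simp
    ring
  have cD2 : (0:ℂ) = -(αk/(b-c))*(αi/(b-a)) - αi/(a-b)*(αk/(b-c)) := by
    field_simp
    all_goals ring
  have cD3 : (0:ℂ) = -αj*((c-a)/((a-b)*(b-c)))*(αi/(c-a)) - αi/(a-b)*(αj/(c-b)) := by
    field_simp
    ring
  linear_combination Dik * cik + Djk * cjk + D1 * cD1 + D2 * cD2 + D3 * cD3

/-- Proposition 4.1 (the S-pair identity): for pairwise distinct `i, j, k`,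
`∂_k(M_{i,j}(α)u) − ∂_i(M_{j,k}(α)u)
 = −α_j·((x_k−x_i)/((x_i−x_j)(x_j−x_k)))·M_{i,k}(α)u − (α_k/(x_j−x_k))·M_{i,j}(α)u
   − (α_i/(x_i−x_j))·M_{j,k}(α)u`. -/
theorem stmt_12 {N : ℕ} (hN : 3 ≤ N) (α : Fin N → ℂ)
    (Ω : Set (Fin N → ℂ)) (hΩ : IsOpen Ω)
    (hΩsub : Ω ⊆ {x | ∀ a b : Fin N, a ≠ b → x a ≠ x b})
    (u : (Fin N → ℂ) → ℂ) (hu : AnalyticOnNhd ℂ u Ω) :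
    ∀ i j k : Fin N, i ≠ j → j ≠ k → i ≠ k → ∀ x ∈ Ω,
      pder k (Mop α i j u) x - pder i (Mop α j k u) x
        = -(α j) * ((x k - x i) / ((x i - x j) * (x j - x k))) * Mop α i k u x
          - (α k / (x j - x k)) * Mop α i j u x
          - (α i / (x i - x j)) * Mop α j k u x := by
  intro i j k hij hjk hik x hx
  have hne : ∀ a b : Fin N, a ≠ b → x a - x b ≠ 0 := fun a b h =>
    sub_ne_zero.2 (hΩsub hx a b h)
  have hxij := hne i j hij
  have hxji := hne j i hij.symm
  have hxjk := hne j k hjk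
  have hxkj := hne k j hjk.symm
  have hxik := hne i k hik
  have hxki := hne k i hik.symm
  -- third derivative commutation
  have h3 : pder k (pder i (pder j u)) x = pder i (pder j (pder k u)) x := by
    have e1 : pder k (pder i (pder j u)) x = pder i (pder k (pder j u)) x :=
      pder_comm (analyticOnNhd_pder j hu) k i hx
    have heq : pder k (pder j u) =ᶠ[nhds x] pder j (pder k u) := by
      filter_upwards [hΩ.mem_nhds hx] with y hy using pder_comm hu k j hy
    have e2 : pder i (pder k (pder j u)) x = pder i (pder j (pder k u)) x := by
      show fderiv ℂ _ x _ = fderiv ℂ _ x _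
      rw [heq.fderiv_eq]
    rw [e1, e2]
  have s1 : pder k (pder i u) x = pder i (pder k u) x := pder_comm hu k i hx
  have s2 : pder k (pder j u) x = pder j (pder k u) x := pder_comm hu k j hx
  have mij : Mop α i j u = fun y => pder i (pder j u) y
      + (α j / (y i - y j)) * pder i u y + (α i / (y j - y i)) * pder j u y := rfl
  have mjk : Mop α j k u = fun y => pder j (pder k u) y
      + (α k / (y j - y k)) * pder j u y + (α j / (y k - y j)) * pder k u y := rfl
  simp only [Mop]
  rw [mij, mjk, key_lemma α hu i j k hx hik.symm hjk.symm hxij,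
    key_lemma α hu j k i hx hij hik hxjk, h3, s1, s2]
  exact alg_identity _ _ _ _ _ _ _ _ _ _ _ _ _ hxij hxjk hxik
end

section
/- Let N ≥ 2, α ∈ ℂ^N, let Ω ⊆ {x ∈ ℂ^N : x_a ≠ x_b for all a ≠ b} be open, and u : Ω → ℂ holomorphic (twice differentiable). Fix distinct 1 ≤ p, q ≤ N, and set v := (x_p − x_q)·∂_q u + α_q·u (that is, v = L_{p,q}(α)u). Then on Ω: (x_q − x_p)·∂_p v + (α_p + 1)·v = −(x_p − x_q)²·( ∂_p∂_q u + (α_q/(x_p − x_q))·∂_p u + (α_p/(x_q − x_p))·∂_q u ) + (α_p + 1)·α_q·u. In other words, L_{q,p}(α + e_p − e_q)∘L_{p,q}(α) = −(x_p − x_q)²·M_{p,q}(α) + (α_p + 1)·α_q as operators on holomorphic functions. -/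
/-- Lemma 4.3: with `v = L_{p,q}(α)u = (x_p − x_q)∂_q u + α_q u`, one has
`L_{q,p}(α+e_p−e_q)v = (x_q − x_p)∂_p v + (α_p+1)v
 = −(x_p − x_q)²·M_{p,q}(α)u + (α_p+1)α_q·u`. -/
theorem stmt_14 {N : ℕ} (hN : 2 ≤ N) (α : Fin N → ℂ)
    (Ω : Set (Fin N → ℂ)) (hΩ : IsOpen Ω)
    (hΩsub : Ω ⊆ {x | ∀ a b : Fin N, a ≠ b → x a ≠ x b})
    (u : (Fin N → ℂ) → ℂ) (hu : AnalyticOnNhd ℂ u Ω)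
    (p q : Fin N) (hpq : p ≠ q)
    (v : (Fin N → ℂ) → ℂ)
    (hv : v = fun x => (x p - x q) * pder q u x + α q * u x) :
    ∀ x ∈ Ω,
      (x q - x p) * pder p v x + (α p + 1) * v x
        = -(x p - x q)^2 *
            (pder p (pder q u) x + (α q / (x p - x q)) * pder p u x
              + (α p / (x q - x p)) * pder q u x)
          + (α p + 1) * α q * u x := by
  intro x hx
  have hne : x p - x q ≠ 0 := sub_ne_zero.2 (hΩsub hx p q hpq)
  have hne' : x q - x p ≠ 0 := sub_ne_zero.2 (hΩsub hx q p hpq.symm)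
  -- analyticity of pder q u
  have hpd : AnalyticOnNhd ℂ (pder q u) Ω := by
    have := (ContinuousLinearMap.apply ℂ ℂ (Pi.single q (1:ℂ))).comp_analyticOnNhd hu.fderiv
    exact this
  have hB : HasFDerivAt (pder q u) (fderiv ℂ (pder q u) x) x :=
    ((hpd x hx).differentiableAt).hasFDerivAt
  have hu' : HasFDerivAt u (fderiv ℂ u x) x := ((hu x hx).differentiableAt).hasFDerivAt
  have hA : HasFDerivAt (fun y : Fin N → ℂ => y p - y q)
      ((ContinuousLinearMap.proj p : (Fin N → ℂ) →L[ℂ] ℂ) - ContinuousLinearMap.proj q) x :=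
    ((ContinuousLinearMap.proj p : (Fin N → ℂ) →L[ℂ] ℂ).hasFDerivAt).sub
      ((ContinuousLinearMap.proj q : (Fin N → ℂ) →L[ℂ] ℂ).hasFDerivAt)
  have hvD : HasFDerivAt v
      (((x p - x q) • fderiv ℂ (pder q u) x
        + pder q u x • ((ContinuousLinearMap.proj p : (Fin N → ℂ) →L[ℂ] ℂ)
            - ContinuousLinearMap.proj q))
        + α q • fderiv ℂ u x) x := by
    rw [hv]
    exact (hA.mul hB).add (hu'.const_mul (α q))
  have hpv : pder p v x
      = (x p - x q) * fderiv ℂ (pder q u) x (Pi.single p 1)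
        + pder q u x + α q * pder p u x := by
    have := hvD.fderiv
    simp only [pder, this, ContinuousLinearMap.add_apply, ContinuousLinearMap.smul_apply,
      ContinuousLinearMap.sub_apply, ContinuousLinearMap.proj_apply,
      Pi.single_eq_same, smul_eq_mul]
    rw [Pi.single_eq_of_ne (Ne.symm hpq)]
    ring
  have hppq : pder p (pder q u) x = fderiv ℂ (pder q u) x (Pi.single p 1) := rfl
  rw [hpv, hv, hppq]
  field_simp
  ring
end

section
/- Let N ≥ 2, α ∈ ℂ^N, let Ω ⊆ {x ∈ ℂ^N : x_a ≠ x_b for all a ≠ b} be open, and u : Ω → ℂ holomorphic (three times differentiable). Fix distinct 1 ≤ p, q ≤ N. Then on Ω: (x_p − x_q)²·M_{p,q}(α + e_p − e_q)( L_{p,q}(α)u ) = L_{p,q}(α)( (x_p − x_q)²·M_{p,q}(α)u ), where M_{p,q}(α+e_p−e_q)w = ∂_p∂_q w + ((α_q−1)/(x_p−x_q))∂_p w + ((α_p+1)/(x_q−x_p))∂_q w, L_{p,q}(α)w = (x_p−x_q)∂_q w + α_q w, and on the right-hand side L_{p,q}(α) is applied to the function x ↦ (x_p−x_q)²·M_{p,q}(α)u(x).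 -/
/-- The contiguity operator `L_{p,q}(α) = (x_p − x_q)∂_q + α_q`. -/
noncomputable def Lop {N : ℕ} (α : Fin N → ℂ) (p q : Fin N) (f : (Fin N → ℂ) → ℂ) :
    (Fin N → ℂ) → ℂ :=
  fun x => (x p - x q) * pder q f x + α q * f x

lemma pder_analyticOnNhd {N : ℕ} {f : (Fin N → ℂ) → ℂ} {Ω : Set (Fin N → ℂ)}
    (hf : AnalyticOnNhd ℂ f Ω) (i : Fin N) : AnalyticOnNhd ℂ (pder i f) Ω := by
  intro x hx
  exact ((ContinuousLinearMap.apply ℂ ℂ (Pi.single i 1)).analyticAt _).comp ((hf x hx).fderiv)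

lemma pder_add {N : ℕ} {f g : (Fin N → ℂ) → ℂ} {x : Fin N → ℂ}
    (hf : DifferentiableAt ℂ f x) (hg : DifferentiableAt ℂ g x) (i : Fin N) :
    pder i (fun y => f y + g y) x = pder i f x + pder i g x := by
  simp [pder, fderiv_fun_add hf hg]

lemma pder_const_mul {N : ℕ} {f : (Fin N → ℂ) → ℂ} {x : Fin N → ℂ}
    (hf : DifferentiableAt ℂ f x) (c : ℂ) (i : Fin N) :
    pder i (fun y => c * f y) x = c * pder i f x := by
  simp [pder, fderiv_const_mul hf]

lemma pder_mul {N : ℕ} {f g : (Fin N → ℂ) → ℂ} {x : Fin N → ℂ}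
    (hf : DifferentiableAt ℂ f x) (hg : DifferentiableAt ℂ g x) (i : Fin N) :
    pder i (fun y => f y * g y) x = pder i f x * g x + f x * pder i g x := by
  simp [pder, fderiv_fun_mul hf hg]
  ring

lemma diff_coord {N : ℕ} (p q : Fin N) (x : Fin N → ℂ) :
    DifferentiableAt ℂ (fun y : Fin N → ℂ => y p - y q) x :=
  ((ContinuousLinearMap.proj p : (Fin N → ℂ) →L[ℂ] ℂ).differentiableAt).sub
    ((ContinuousLinearMap.proj q : (Fin N → ℂ) →L[ℂ] ℂ).differentiableAt)

lemma pder_coord {N : ℕ} (i p q : Fin N) (x : Fin N → ℂ) :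
    pder i (fun y : Fin N → ℂ => y p - y q) x
      = (Pi.single i 1 : Fin N → ℂ) p - (Pi.single i 1 : Fin N → ℂ) q := by
  have hp := (ContinuousLinearMap.proj p : (Fin N → ℂ) →L[ℂ] ℂ).hasFDerivAt (x := x)
  have hq := (ContinuousLinearMap.proj q : (Fin N → ℂ) →L[ℂ] ℂ).hasFDerivAt (x := x)
  have h2 := (hp.fun_sub hq).fderiv
  simp only [ContinuousLinearMap.proj_apply] at h2
  simp only [pder]
  rw [h2]
  simp

lemma pder_comm_s15 {N : ℕ} {f : (Fin N → ℂ) → ℂ} {x : Fin N → ℂ}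
    (hf : AnalyticAt ℂ f x) (i j : Fin N) :
    pder i (pder j f) x = pder j (pder i f) x := by
  have hs : IsSymmSndFDerivAt ℂ f x :=
    (hf.contDiffAt (n := 2)).isSymmSndFDerivAt (by simp [minSmoothness_of_isRCLikeNormedField])
  have hd : DifferentiableAt ℂ (fderiv ℂ f) x := hf.fderiv.differentiableAt
  have key : ∀ v w : Fin N → ℂ,
      fderiv ℂ (fun y => fderiv ℂ f y w) x v = fderiv ℂ (fderiv ℂ f) x v w := by
    intro v w
    rw [fderiv_clm_apply hd (differentiableAt_const w)]
    simp
  show fderiv ℂ (fun y => fderiv ℂ f y (Pi.single j 1)) x (Pi.single i 1)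
      = fderiv ℂ (fun y => fderiv ℂ f y (Pi.single i 1)) x (Pi.single j 1)
  rw [key, key]
  exact hs _ _

set_option maxHeartbeats 1000000 in
/-- Lemma 4.4 (the intertwining relation):
`(x_p − x_q)²·M_{p,q}(α+e_p−e_q)(L_{p,q}(α)u) = L_{p,q}(α)((x_p − x_q)²·M_{p,q}(α)u)`. -/
theorem stmt_15 {N : ℕ} (hN : 2 ≤ N) (α : Fin N → ℂ)
    (Ω : Set (Fin N → ℂ)) (hΩ : IsOpen Ω)
    (hΩsub : Ω ⊆ {x | ∀ a b : Fin N, a ≠ b → x a ≠ x b})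
    (u : (Fin N → ℂ) → ℂ) (hu : AnalyticOnNhd ℂ u Ω)
    (p q : Fin N) (hpq : p ≠ q) :
    ∀ x ∈ Ω,
      (x p - x q)^2 * Mop (α + Pi.single p 1 - Pi.single q 1) p q (Lop α p q u) x
        = Lop α p q (fun y => (y p - y q)^2 * Mop α p q u y) x := by
  intro x hx
  have hqp : q ≠ p := hpq.symm
  have hc : x p - x q ≠ 0 := sub_ne_zero.mpr (hΩsub hx p q hpq)
  have hc' : x q - x p ≠ 0 := sub_ne_zero.mpr (hΩsub hx q p hqp)
  -- analyticity of iterated partial derivatives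
  have huq : AnalyticOnNhd ℂ (pder q u) Ω := pder_analyticOnNhd hu q
  have hup : AnalyticOnNhd ℂ (pder p u) Ω := pder_analyticOnNhd hu p
  have hupq : AnalyticOnNhd ℂ (pder p (pder q u)) Ω := pder_analyticOnNhd huq p
  have huqq : AnalyticOnNhd ℂ (pder q (pder q u)) Ω := pder_analyticOnNhd huq q
  have hLopdef : Lop α p q u = fun y => (y p - y q) * pder q u y + α q * u y := rfl
  have hsingle_pp : (Pi.single p 1 : Fin N → ℂ) p = 1 := Pi.single_eq_same p 1
  have hsingle_pq : (Pi.single p 1 : Fin N → ℂ) q = 0 := Pi.single_eq_of_ne hqp 1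
  have hsingle_qq : (Pi.single q 1 : Fin N → ℂ) q = 1 := Pi.single_eq_same q 1
  have hsingle_qp : (Pi.single q 1 : Fin N → ℂ) p = 0 := Pi.single_eq_of_ne hpq 1
  -- ∂_q (Lop u) on Ω
  have hLq : ∀ z ∈ Ω, pder q (Lop α p q u) z
      = (z p - z q) * pder q (pder q u) z + (α q - 1) * pder q u z := by
    intro z hz
    have h1 := diff_coord p q z
    have h2 := (huq z hz).differentiableAt
    have h3 := (hu z hz).differentiableAt
    rw [hLopdef, pder_add (h1.fun_mul h2) (h3.const_mul (α q)), pder_mul h1 h2,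
      pder_const_mul h3, pder_coord, hsingle_qq, hsingle_qp]
    ring
  -- ∂_p (Lop u) at x
  have hLp : pder p (Lop α p q u) x
      = pder q u x + (x p - x q) * pder p (pder q u) x + α q * pder p u x := by
    have h1 := diff_coord p q x
    have h2 := (huq x hx).differentiableAt
    have h3 := (hu x hx).differentiableAt
    rw [hLopdef, pder_add (h1.fun_mul h2) (h3.const_mul (α q)), pder_mul h1 h2,
      pder_const_mul h3, pder_coord, hsingle_pp, hsingle_pq]
    ring
  -- ∂_p ∂_q (Lop u) at x
  have hLpq : pder p (pder q (Lop α p q u)) x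
      = pder q (pder q u) x + (x p - x q) * pder p (pder q (pder q u)) x
        + (α q - 1) * pder p (pder q u) x := by
    have hev : pder q (Lop α p q u)
        =ᶠ[nhds x] fun z => (z p - z q) * pder q (pder q u) z + (α q - 1) * pder q u z := by
      filter_upwards [hΩ.mem_nhds hx] with z hz using hLq z hz
    have hstep : pder p (pder q (Lop α p q u)) x
        = pder p (fun z => (z p - z q) * pder q (pder q u) z + (α q - 1) * pder q u z) x := by
      show fderiv ℂ (pder q (Lop α p q u)) x (Pi.single p 1)
        = fderiv ℂ (fun z => (z p - z q) * pder q (pder q u) z + (α q - 1) * pder q u z) x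
            (Pi.single p 1)
      rw [Filter.EventuallyEq.fderiv_eq hev]
    have h1 := diff_coord p q x
    have h4 := (huqq x hx).differentiableAt
    have h2 := (huq x hx).differentiableAt
    rw [hstep, pder_add (h1.fun_mul h4) (h2.const_mul (α q - 1)), pder_mul h1 h4,
      pder_const_mul h2, pder_coord, hsingle_pp, hsingle_pq]
    ring
  -- the RHS inner function, simplified on Ω
  have hFG : ∀ z ∈ Ω, (z p - z q)^2 * Mop α p q u z
      = (z p - z q) * ((z p - z q) * pder p (pder q u) z)
        + (α q * ((z p - z q) * pder p u z) + (-α p) * ((z p - z q) * pder q u z)) := by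
    intro z hz
    have hcz : z p - z q ≠ 0 := sub_ne_zero.mpr (hΩsub hz p q hpq)
    have hcz' : z q - z p ≠ 0 := sub_ne_zero.mpr (hΩsub hz q p hqp)
    simp only [Mop]
    field_simp
    ring
  -- ∂_q of the RHS inner function at x
  have hqF : pder q (fun y => (y p - y q)^2 * Mop α p q u y) x
      = -2 * ((x p - x q) * pder p (pder q u) x)
        + (x p - x q) * ((x p - x q) * pder p (pder q (pder q u)) x)
        + α q * (-(pder p u x) + (x p - x q) * pder p (pder q u) x)
        + (-α p) * (-(pder q u x) + (x p - x q) * pder q (pder q u) x) := by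
    have hev : (fun y => (y p - y q)^2 * Mop α p q u y)
        =ᶠ[nhds x] fun z => (z p - z q) * ((z p - z q) * pder p (pder q u) z)
          + (α q * ((z p - z q) * pder p u z) + (-α p) * ((z p - z q) * pder q u z)) := by
      filter_upwards [hΩ.mem_nhds hx] with z hz using hFG z hz
    have hstep : pder q (fun y => (y p - y q)^2 * Mop α p q u y) x
        = pder q (fun z => (z p - z q) * ((z p - z q) * pder p (pder q u) z)
          + (α q * ((z p - z q) * pder p u z) + (-α p) * ((z p - z q) * pder q u z))) x := by
      show fderiv ℂ (fun y => (y p - y q)^2 * Mop α p q u y) x (Pi.single q 1)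
        = fderiv ℂ (fun z => (z p - z q) * ((z p - z q) * pder p (pder q u) z)
          + (α q * ((z p - z q) * pder p u z) + (-α p) * ((z p - z q) * pder q u z))) x
            (Pi.single q 1)
      rw [Filter.EventuallyEq.fderiv_eq hev]
    have h1 := diff_coord p q x
    have hd1 := (hup x hx).differentiableAt
    have hd2 := (huq x hx).differentiableAt
    have hd3 := (hupq x hx).differentiableAt
    have hm3 : DifferentiableAt ℂ (fun y => (y p - y q) * pder p (pder q u) y) x := h1.mul hd3
    have hm1 : DifferentiableAt ℂ (fun y => (y p - y q) * pder p u y) x := h1.mul hd1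
    have hm2 : DifferentiableAt ℂ (fun y => (y p - y q) * pder q u y) x := h1.mul hd2
    have hcomm1 : pder q (pder p u) x = pder p (pder q u) x := pder_comm_s15 (hu x hx) q p
    have hcomm2 : pder q (pder p (pder q u)) x = pder p (pder q (pder q u)) x :=
      pder_comm_s15 (huq x hx) q p
    rw [hstep, pder_add (h1.fun_mul hm3) ((hm1.const_mul (α q)).fun_add (hm2.const_mul (-α p))),
      pder_mul h1 hm3, pder_mul h1 hd3,
      pder_add (hm1.const_mul (α q)) (hm2.const_mul (-α p)),
      pder_const_mul hm1, pder_const_mul hm2, pder_mul h1 hd1, pder_mul h1 hd2,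
      pder_coord, hsingle_qq, hsingle_qp, hcomm1, hcomm2]
    ring
  -- assemble
  have hαq : (α + Pi.single p 1 - Pi.single q 1 : Fin N → ℂ) q = α q - 1 := by
    simp only [Pi.sub_apply, Pi.add_apply, hsingle_pq, hsingle_qq]
    ring
  have hαp : (α + Pi.single p 1 - Pi.single q 1 : Fin N → ℂ) p = α p + 1 := by
    simp only [Pi.sub_apply, Pi.add_apply, hsingle_pp, hsingle_qp]
    ring
  have hM : Mop (α + Pi.single p 1 - Pi.single q 1) p q (Lop α p q u) x
      = pder p (pder q (Lop α p q u)) x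
      + ((α + Pi.single p 1 - Pi.single q 1 : Fin N → ℂ) q / (x p - x q)) * pder p (Lop α p q u) x
      + ((α + Pi.single p 1 - Pi.single q 1 : Fin N → ℂ) p / (x q - x p)) * pder q (Lop α p q u) x := rfl
  have hL : Lop α p q (fun y => (y p - y q)^2 * Mop α p q u y) x
      = (x p - x q) * pder q (fun y => (y p - y q)^2 * Mop α p q u y) x
      + α q * ((x p - x q)^2 * Mop α p q u x) := rfl
  rw [hM, hL, hαq, hαp, hLpq, hLp, hLq x hx, hqF, hFG x hx]
  field_simp
  ring
end

section
/- Let N ≥ 2, α ∈ ℂ^N, fix distinct 1 ≤ i, j ≤ N, and assume p(n) := (α_i + n)(α_j − n + 1) ≠ 0 for all n ∈ ℤ. Let Ω ⊆ {x ∈ ℂ^N : x_a ≠ x_b for all a ≠ b, and x_i − x_j ∈ ℂ∖ℝ_{≤0}} be open. Let u : ℤ → (Ω → ℂ) be a family of holomorphic functions such that for each n ∈ ℤ: (a) u_n satisfies the Euler–Poisson–Darboux system at shifted parameters, M_{p,q}(α + n(e_i − e_j))u_n = 0 for all distinct p, q (in particular ∂_i∂_j u_n + ((α_j − n)/(x_i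 − x_j))∂_i u_n + ((α_i + n)/(x_j − x_i))∂_j u_n = 0); (b) u_{n+1} = (x_i − x_j)·∂_j u_n + (α_j − n)·u_n; (c) (x_j − x_i)·∂_i u_n + (α_i + n)·u_n = (α_i + n)(α_j − n + 1)·u_{n−1}. Let B : ℤ → ℂ satisfy B(n+1)·B(n−1) = p(n)·B(n)² for all n. Then τ_n := B(n)·(x_i − x_j)^{(α_i+n)(α_j−n)}·u_n satisfies the bilinear 2-dimensional Toda–Hirota equation τ_n·∂_i∂_j τ_n − (∂_i τ_n)(∂_j τ_n) = τ_{n+1}·τ_{n−1} on Ω for all n ∈ ℤ. -/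
set_option maxHeartbeats 1000000
set_option synthInstance.maxHeartbeats 1000000

private lemma w_hasFDerivAt {N : ℕ} (i j : Fin N) (y : Fin N → ℂ) :
    HasFDerivAt (fun z : Fin N → ℂ => z i - z j)
      ((ContinuousLinearMap.proj i : (Fin N → ℂ) →L[ℂ] ℂ) - ContinuousLinearMap.proj j) y :=
  (ContinuousLinearMap.proj i : (Fin N → ℂ) →L[ℂ] ℂ).hasFDerivAt.sub
    (ContinuousLinearMap.proj j : (Fin N → ℂ) →L[ℂ] ℂ).hasFDerivAt

private lemma cpow_hasFDerivAt {N : ℕ} (i j : Fin N) (e : ℂ) (y : Fin N → ℂ)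
    (h0 : y i - y j ∈ Complex.slitPlane) :
    HasFDerivAt (fun z : Fin N → ℂ => (z i - z j) ^ e)
      ((e * (y i - y j) ^ (e - 1)) •
        ((ContinuousLinearMap.proj i : (Fin N → ℂ) →L[ℂ] ℂ) - ContinuousLinearMap.proj j)) y := by
  have h := (w_hasFDerivAt i j y).cpow (hasFDerivAt_const e y) h0
  exact h.congr_fderiv (by ext z; simp)

/-- Theorem 4.10(1), the main theorem: given a family `u_n` of solutions of the
Euler–Poisson–Darboux systems at shifted parameters `α + n(e_i − e_j)` connected by the
contiguity relations `u_{n+1} = H_n u_n` and `L_{j,i}(α+n(e_i−e_j))u_n = p(n)·u_{n−1}`,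
and `B` with `B(n+1)B(n−1) = p(n)B(n)²` where `p(n) = (α_i+n)(α_j−n+1) ≠ 0`, the family
`τ_n = B(n)·(x_i−x_j)^{(α_i+n)(α_j−n)}·u_n` solves the bilinear 2-dimensional
Toda–Hirota equation `τ_n·∂_i∂_j τ_n − (∂_iτ_n)(∂_jτ_n) = τ_{n+1}τ_{n−1}`. -/
theorem stmt_18 {N : ℕ} (hN : 2 ≤ N) (α : Fin N → ℂ)
    (i j : Fin N) (hij : i ≠ j)
    (hp : ∀ n : ℤ, (α i + n) * (α j - n + 1) ≠ 0)
    (Ω : Set (Fin N → ℂ)) (hΩ : IsOpen Ω)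
    (hΩsub : Ω ⊆ {x | (∀ a b : Fin N, a ≠ b → x a ≠ x b) ∧
      x i - x j ∈ Complex.slitPlane})
    (u : ℤ → (Fin N → ℂ) → ℂ)
    (hu : ∀ n : ℤ, AnalyticOnNhd ℂ (u n) Ω)
    (αsh : ℤ → Fin N → ℂ)
    (hαsh : ∀ n : ℤ, αsh n
      = fun k => α k + (n : ℂ) *
          ((Pi.single i (1 : ℂ) : Fin N → ℂ) k - (Pi.single j (1 : ℂ) : Fin N → ℂ) k))
    (hEPD : ∀ n : ℤ, ∀ p q : Fin N, p ≠ q → ∀ x ∈ Ω,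
      pder p (pder q (u n)) x + (αsh n q / (x p - x q)) * pder p (u n) x
        + (αsh n p / (x q - x p)) * pder q (u n) x = 0)
    (hH : ∀ n : ℤ, ∀ x ∈ Ω,
      u (n+1) x = (x i - x j) * pder j (u n) x + (α j - n) * u n x)
    (hB : ∀ n : ℤ, ∀ x ∈ Ω,
      (x j - x i) * pder i (u n) x + (α i + n) * u n x
        = (α i + n) * (α j - n + 1) * u (n-1) x)
    (B : ℤ → ℂ)
    (hBrec : ∀ n : ℤ, B (n+1) * B (n-1) = (α i + n) * (α j - n + 1) * (B n)^2)
    (τ : ℤ → (Fin N → ℂ) → ℂ)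
    (hτ : ∀ n : ℤ, τ n
      = fun x => B n * (x i - x j) ^ ((α i + n) * (α j - n)) * u n x) :
    ∀ n : ℤ, ∀ x ∈ Ω,
      τ n x * pder i (pder j (τ n)) x - pder i (τ n) x * pder j (τ n) x
        = τ (n+1) x * τ (n-1) x := by
  intro n x hx
  have hsl : ∀ y ∈ Ω, y i - y j ∈ Complex.slitPlane := fun y hy => (hΩsub hy).2
  have hw : x i - x j ≠ 0 := Complex.slitPlane_ne_zero (hsl x hx)
  have hud : ∀ (m : ℤ), ∀ y ∈ Ω, HasFDerivAt (u m) (fderiv ℂ (u m) y) y :=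
    fun m y hy => ((hu m y hy).differentiableAt).hasFDerivAt
  have hsii : (Pi.single i (1:ℂ) : Fin N → ℂ) i - (Pi.single i (1:ℂ) : Fin N → ℂ) j = 1 := by
    simp [Pi.single_apply, hij, Ne.symm hij]
  have hsjj : (Pi.single j (1:ℂ) : Fin N → ℂ) i - (Pi.single j (1:ℂ) : Fin N → ℂ) j = -1 := by
    simp [Pi.single_apply, hij, Ne.symm hij]
  -- first derivatives of τ n
  have key1 : ∀ (p : Fin N), ∀ y ∈ Ω, pder p (τ n) y
      = B n * ((y i - y j) ^ ((α i + (n:ℂ)) * (α j - (n:ℂ))) * pder p (u n) y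
          + ((α i + (n:ℂ)) * (α j - (n:ℂ))) * (y i - y j) ^ ((α i + (n:ℂ)) * (α j - (n:ℂ)) - 1)
            * ((Pi.single p (1:ℂ) : Fin N → ℂ) i - (Pi.single p (1:ℂ) : Fin N → ℂ) j) * u n y) := by
    intro p y hy
    have hprod : HasFDerivAt
        (fun z : Fin N → ℂ => B n * (z i - z j) ^ ((α i + (n:ℂ)) * (α j - (n:ℂ))) * u n z)
        ((B n * (y i - y j) ^ ((α i + (n:ℂ)) * (α j - (n:ℂ)))) • fderiv ℂ (u n) y
          + u n y • ((B n) • ((((α i + (n:ℂ)) * (α j - (n:ℂ)))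
              * (y i - y j) ^ ((α i + (n:ℂ)) * (α j - (n:ℂ)) - 1)) •
            ((ContinuousLinearMap.proj i : (Fin N → ℂ) →L[ℂ] ℂ) - ContinuousLinearMap.proj j)))) y :=
      ((cpow_hasFDerivAt i j _ y (hsl y hy)).const_mul (B n)).mul (hud n y hy)
    simp only [pder]
    rw [hτ n, hprod.fderiv]
    simp only [ContinuousLinearMap.add_apply, ContinuousLinearMap.coe_smul', Pi.smul_apply,
      ContinuousLinearMap.smul_apply, ContinuousLinearMap.sub_apply,
      ContinuousLinearMap.proj_apply, smul_eq_mul]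
    ring
  have ki : pder i (τ n) x
      = B n * ((x i - x j) ^ ((α i + (n:ℂ)) * (α j - (n:ℂ))) * pder i (u n) x
          + ((α i + (n:ℂ)) * (α j - (n:ℂ))) * (x i - x j) ^ ((α i + (n:ℂ)) * (α j - (n:ℂ)) - 1)
            * u n x) := by
    rw [key1 i x hx, hsii]; ring
  have kj : pder j (τ n) x
      = B n * ((x i - x j) ^ ((α i + (n:ℂ)) * (α j - (n:ℂ))) * pder j (u n) x
          - ((α i + (n:ℂ)) * (α j - (n:ℂ))) * (x i - x j) ^ ((α i + (n:ℂ)) * (α j - (n:ℂ)) - 1)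
            * u n x) := by
    rw [key1 j x hx, hsjj]; ring
  -- second derivative
  have hDju : DifferentiableAt ℂ (pder j (u n)) x := by
    have h1 : AnalyticOnNhd ℂ (fderiv ℂ (u n)) Ω := (hu n).fderiv
    exact ((ContinuousLinearMap.apply ℂ ℂ (Pi.single j (1:ℂ))).differentiableAt).comp x
      (h1 x hx).differentiableAt
  have hEF : pder j (τ n) =ᶠ[nhds x]
      (fun y => B n * ((y i - y j) ^ ((α i + (n:ℂ)) * (α j - (n:ℂ))) * pder j (u n) y
        - ((α i + (n:ℂ)) * (α j - (n:ℂ))) * (y i - y j) ^ ((α i + (n:ℂ)) * (α j - (n:ℂ)) - 1)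
          * u n y)) := by
    filter_upwards [hΩ.mem_nhds hx] with y hy
    rw [key1 j y hy, hsjj]; ring
  have hF : HasFDerivAt
      (fun y : Fin N → ℂ => B n * ((y i - y j) ^ ((α i + (n:ℂ)) * (α j - (n:ℂ))) * pder j (u n) y
        - ((α i + (n:ℂ)) * (α j - (n:ℂ))) * (y i - y j) ^ ((α i + (n:ℂ)) * (α j - (n:ℂ)) - 1)
          * u n y))
      ((B n) • ((((x i - x j) ^ ((α i + (n:ℂ)) * (α j - (n:ℂ)))) • fderiv ℂ (pder j (u n)) x
          + pder j (u n) x • ((((α i + (n:ℂ)) * (α j - (n:ℂ)))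
              * (x i - x j) ^ ((α i + (n:ℂ)) * (α j - (n:ℂ)) - 1)) •
            ((ContinuousLinearMap.proj i : (Fin N → ℂ) →L[ℂ] ℂ) - ContinuousLinearMap.proj j)))
        - ((((α i + (n:ℂ)) * (α j - (n:ℂ))) * (x i - x j) ^ ((α i + (n:ℂ)) * (α j - (n:ℂ)) - 1))
              • fderiv ℂ (u n) x
          + u n x • ((((α i + (n:ℂ)) * (α j - (n:ℂ)))) •
              ((((α i + (n:ℂ)) * (α j - (n:ℂ)) - 1)
                  * (x i - x j) ^ ((α i + (n:ℂ)) * (α j - (n:ℂ)) - 1 - 1)) •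
                ((ContinuousLinearMap.proj i : (Fin N → ℂ) →L[ℂ] ℂ)
                  - ContinuousLinearMap.proj j)))))) x := by
    apply HasFDerivAt.const_mul
    exact ((cpow_hasFDerivAt i j _ x (hsl x hx)).mul hDju.hasFDerivAt).sub
      (((cpow_hasFDerivAt i j _ x (hsl x hx)).const_mul _).mul (hud n x hx))
  have kij : pder i (pder j (τ n)) x
      = B n * ((x i - x j) ^ ((α i + (n:ℂ)) * (α j - (n:ℂ))) * pder i (pder j (u n)) x
          + ((α i + (n:ℂ)) * (α j - (n:ℂ))) * (x i - x j) ^ ((α i + (n:ℂ)) * (α j - (n:ℂ)) - 1)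
            * pder j (u n) x
          - ((α i + (n:ℂ)) * (α j - (n:ℂ))) * (x i - x j) ^ ((α i + (n:ℂ)) * (α j - (n:ℂ)) - 1)
            * pder i (u n) x
          - ((α i + (n:ℂ)) * (α j - (n:ℂ))) * ((α i + (n:ℂ)) * (α j - (n:ℂ)) - 1)
            * (x i - x j) ^ ((α i + (n:ℂ)) * (α j - (n:ℂ)) - 1 - 1) * u n x) := by
    have e0 : pder i (pder j (τ n)) x = fderiv ℂ (pder j (τ n)) x (Pi.single i 1) := rfl
    rw [e0, hEF.fderiv_eq, hF.fderiv]
    simp only [ContinuousLinearMap.coe_smul', Pi.smul_apply, ContinuousLinearMap.sub_apply,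
      ContinuousLinearMap.add_apply, ContinuousLinearMap.smul_apply,
      ContinuousLinearMap.proj_apply, smul_eq_mul]
    rw [show (Pi.single i (1:ℂ) : Fin N → ℂ) i - (Pi.single i (1:ℂ) : Fin N → ℂ) j = 1 from hsii]
    simp only [pder]
    ring
  -- EPD relation
  have hshi : αsh n i = α i + (n:ℂ) := by
    rw [hαsh n]; simp [Pi.single_apply, hij, Ne.symm hij]
  have hshj : αsh n j = α j - (n:ℂ) := by
    rw [hαsh n]; simp [Pi.single_apply, hij, Ne.symm hij]; ring
  have hji : x j - x i ≠ 0 := by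
    intro h0; exact hw (by linear_combination -h0)
  have hUij : pder i (pder j (u n)) x
      = ((α i + (n:ℂ)) * pder j (u n) x - (α j - (n:ℂ)) * pder i (u n) x) / (x i - x j) := by
    rw [eq_div_iff hw]
    have h := hEPD n i j hij x hx
    rw [hshi, hshj, show x j - x i = -(x i - x j) from by ring, div_neg] at h
    field_simp [hw] at h
    linear_combination h
  have hum : u (n-1) x
      = ((x j - x i) * pder i (u n) x + (α i + (n:ℂ)) * u n x)
          / ((α i + (n:ℂ)) * (α j - (n:ℂ) + 1)) := by
    rw [eq_div_iff (hp n)]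
    linear_combination -(hB n x hx)
  -- the right-hand side
  have hτp : τ (n+1) x
      = B (n+1) * (x i - x j) ^ ((α i + ((n:ℂ)+1)) * (α j - ((n:ℂ)+1))) * u (n+1) x := by
    simp only [hτ]; push_cast; ring_nf
  have hτm : τ (n-1) x
      = B (n-1) * (x i - x j) ^ ((α i + ((n:ℂ)-1)) * (α j - ((n:ℂ)-1))) * u (n-1) x := by
    simp only [hτ]; push_cast; ring_nf
  have hpow : (x i - x j) ^ ((α i + ((n:ℂ)+1)) * (α j - ((n:ℂ)+1)))
        * (x i - x j) ^ ((α i + ((n:ℂ)-1)) * (α j - ((n:ℂ)-1)))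
      = (x i - x j) ^ ((α i + (n:ℂ)) * (α j - (n:ℂ)))
        * ((x i - x j) ^ ((α i + (n:ℂ)) * (α j - (n:ℂ))) / (x i - x j) / (x i - x j)) := by
    rw [← Complex.cpow_add _ _ hw,
      show (α i + ((n:ℂ)+1)) * (α j - ((n:ℂ)+1)) + (α i + ((n:ℂ)-1)) * (α j - ((n:ℂ)-1))
        = ((α i + (n:ℂ)) * (α j - (n:ℂ))) + (((α i + (n:ℂ)) * (α j - (n:ℂ))) - 1 - 1) from by ring,
      Complex.cpow_add _ _ hw, Complex.cpow_sub _ _ hw, Complex.cpow_sub _ _ hw,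
      Complex.cpow_one]
  have hRHS : τ (n+1) x * τ (n-1) x
      = (α i + (n:ℂ)) * (α j - (n:ℂ) + 1) * (B n)^2
        * ((x i - x j) ^ ((α i + (n:ℂ)) * (α j - (n:ℂ)))
            * ((x i - x j) ^ ((α i + (n:ℂ)) * (α j - (n:ℂ))) / (x i - x j) / (x i - x j)))
        * (u (n+1) x * u (n-1) x) := by
    rw [hτp, hτm]
    linear_combination
      (u (n+1) x * u (n-1) x * ((x i - x j) ^ ((α i + ((n:ℂ)+1)) * (α j - ((n:ℂ)+1)))
        * (x i - x j) ^ ((α i + ((n:ℂ)-1)) * (α j - ((n:ℂ)-1))))) * hBrec n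
      + (u (n+1) x * u (n-1) x * ((α i + (n:ℂ)) * (α j - (n:ℂ) + 1) * (B n)^2)) * hpow
  -- assemble
  have hτn : τ n x = B n * (x i - x j) ^ ((α i + (n:ℂ)) * (α j - (n:ℂ))) * u n x := by
    rw [hτ n]
  have hc1 : (x i - x j) ^ ((α i + (n:ℂ)) * (α j - (n:ℂ)) - 1)
      = (x i - x j) ^ ((α i + (n:ℂ)) * (α j - (n:ℂ))) / (x i - x j) := by
    rw [Complex.cpow_sub _ _ hw, Complex.cpow_one]
  have hc2 : (x i - x j) ^ ((α i + (n:ℂ)) * (α j - (n:ℂ)) - 1 - 1)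
      = (x i - x j) ^ ((α i + (n:ℂ)) * (α j - (n:ℂ))) / (x i - x j) / (x i - x j) := by
    rw [Complex.cpow_sub _ _ hw, Complex.cpow_one, hc1]
  rw [kij, ki, kj, hRHS, hτn, hH n x hx, hUij, hum, hc1, hc2]
  field_simp [hw, hp n, left_ne_zero_of_mul (hp n), right_ne_zero_of_mul (hp n)]
  ring
end
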